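/- arXiv:2404.00258 — 2 statements merged into one kernel-verified Lean document; each statement's English description precedes it below -/
import Mathlib

section
/- Let a satisfy the hypotheses (A). Then, with f(s) := e^{a(s)} and F(s) := ∫_s^∞ e^{−a(t)} dt: (i) ( f'(s)·F(s) − 1 + a''(s)/a'(s)² ) · a'(s)⁴ / ( 3·a''(s)² − a'(s)·a'''(s) ) → 1 as s → ∞; (ii) there exist C > 0 and s₂ > 0 such that for all s ≥ s₂: | f(s)·f''(s)·F(s)/f'(s) − 1 − ( 2·a''(s)² − a'(s)·a'''(s) ) / a'(s)⁴ | ≤ C · ( |a''(s)·a'''(s)|/a'(s)⁵ + |a''''(s)|/a'(s)⁴ + |a''(s)|³/a'(s)⁶ ). -/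
open MeasureTheory Filter Set Real

noncomputable def aseq (a : ℝ → ℝ) : ℕ → ℝ → ℝ
  | 0 => fun s => 1 / deriv a s
  | n + 1 => fun s => deriv (aseq a n) s / deriv a s

section aux
variable {a : ℝ → ℝ}

lemma cd1 (ha : ContDiffOn ℝ 5 a (Set.Ioi 0)) : ContDiffOn ℝ 4 (deriv a) (Set.Ioi 0) :=
  ha.deriv_of_isOpen isOpen_Ioi (by norm_num)
lemma cd2 (ha : ContDiffOn ℝ 5 a (Set.Ioi 0)) : ContDiffOn ℝ 3 (deriv (deriv a)) (Set.Ioi 0) :=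
  (cd1 ha).deriv_of_isOpen isOpen_Ioi (by norm_num)
lemma cd3 (ha : ContDiffOn ℝ 5 a (Set.Ioi 0)) :
    ContDiffOn ℝ 2 (deriv (deriv (deriv a))) (Set.Ioi 0) :=
  (cd2 ha).deriv_of_isOpen isOpen_Ioi (by norm_num)
lemma cd4 (ha : ContDiffOn ℝ 5 a (Set.Ioi 0)) :
    ContDiffOn ℝ 1 (deriv (deriv (deriv (deriv a)))) (Set.Ioi 0) :=
  (cd3 ha).deriv_of_isOpen isOpen_Ioi (by norm_num)

lemma hdAt {f : ℝ → ℝ} {n : WithTop ℕ∞} (hf : ContDiffOn ℝ n f (Set.Ioi 0)) (hn : 1 ≤ n)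
    {s : ℝ} (hs : 0 < s) : HasDerivAt f (deriv f s) s :=
  (((hf.differentiableOn (zero_lt_one.trans_le hn).ne').differentiableAt (Ioi_mem_nhds hs))).hasDerivAt

lemma hd1 (ha : ContDiffOn ℝ 5 a (Set.Ioi 0)) {s : ℝ} (hs : 0 < s) :
    HasDerivAt a (deriv a s) s := hdAt ha (by norm_num) hs
lemma hd2 (ha : ContDiffOn ℝ 5 a (Set.Ioi 0)) {s : ℝ} (hs : 0 < s) :
    HasDerivAt (deriv a) (deriv (deriv a) s) s := hdAt (cd1 ha) (by norm_num) hs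
lemma hd3 (ha : ContDiffOn ℝ 5 a (Set.Ioi 0)) {s : ℝ} (hs : 0 < s) :
    HasDerivAt (deriv (deriv a)) (deriv (deriv (deriv a)) s) s := hdAt (cd2 ha) (by norm_num) hs
lemma hd4 (ha : ContDiffOn ℝ 5 a (Set.Ioi 0)) {s : ℝ} (hs : 0 < s) :
    HasDerivAt (deriv (deriv (deriv a))) (deriv (deriv (deriv (deriv a))) s) s :=
  hdAt (cd3 ha) (by norm_num) hs
lemma hd5 (ha : ContDiffOn ℝ 5 a (Set.Ioi 0)) {s : ℝ} (hs : 0 < s) :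
    HasDerivAt (deriv (deriv (deriv (deriv a))))
      (deriv (deriv (deriv (deriv (deriv a)))) s) s := hdAt (cd4 ha) (by norm_num) hs

def U (a : ℝ → ℝ) : Set ℝ := {t | 0 < t ∧ deriv a t ≠ 0}

lemma U_open (ha : ContDiffOn ℝ 5 a (Set.Ioi 0)) : IsOpen (U a) := by
  have hc : ContinuousOn (deriv a) (Set.Ioi 0) := (cd1 ha).continuousOn
  have : U a = Set.Ioi 0 ∩ (deriv a) ⁻¹' {(0:ℝ)}ᶜ := rfl
  rw [this]
  exact hc.isOpen_inter_preimage isOpen_Ioi isOpen_compl_singleton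

lemma U_mem_nhds (ha : ContDiffOn ℝ 5 a (Set.Ioi 0)) {s : ℝ} (hs : s ∈ U a) : U a ∈ nhds s :=
  (U_open ha).mem_nhds hs

lemma haseq0 (ha : ContDiffOn ℝ 5 a (Set.Ioi 0)) {s : ℝ} (hs : s ∈ U a) :
    HasDerivAt (aseq a 0) (-(deriv (deriv a) s) / (deriv a s) ^ 2) s := by
  have h := (hd2 ha hs.1).inv hs.2
  have he : aseq a 0 = fun t => (deriv a t)⁻¹ := by
    funext t; simp [aseq, one_div]
  rw [he]; exact h

lemma deriv_aseq0 (ha : ContDiffOn ℝ 5 a (Set.Ioi 0)) {s : ℝ} (hs : s ∈ U a) :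
    deriv (aseq a 0) s = -(deriv (deriv a) s) / (deriv a s) ^ 2 := (haseq0 ha hs).deriv

lemma aseq1_eq (ha : ContDiffOn ℝ 5 a (Set.Ioi 0)) {s : ℝ} (hs : s ∈ U a) :
    aseq a 1 s = -(deriv (deriv a) s) / (deriv a s) ^ 3 := by
  show deriv (aseq a 0) s / deriv a s = _
  rw [deriv_aseq0 ha hs, div_div, ← pow_succ]

lemma haseq1 (ha : ContDiffOn ℝ 5 a (Set.Ioi 0)) {s : ℝ} (hs : s ∈ U a) :
    HasDerivAt (aseq a 1)
      ((3 * (deriv (deriv a) s) ^ 2 - deriv a s * deriv (deriv (deriv a)) s)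
        / (deriv a s) ^ 4) s := by
  have hev : aseq a 1 =ᶠ[nhds s]
      (fun t => -(deriv (deriv a) t) / (deriv a t) ^ 3) := by
    filter_upwards [U_mem_nhds ha hs] with t ht using aseq1_eq ha ht
  have h : HasDerivAt (fun t => -(deriv (deriv a) t) / (deriv a t) ^ 3)
      ((3 * (deriv (deriv a) s) ^ 2 - deriv a s * deriv (deriv (deriv a)) s)
        / (deriv a s) ^ 4) s := by
    have hd := (hd3 ha hs.1).neg.div ((hd2 ha hs.1).pow 3) (pow_ne_zero 3 hs.2)
    refine hd.congr_deriv ?_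
    simp only [Pi.pow_apply, Pi.neg_apply, Nat.cast_ofNat]
    field_simp [hs.2]
    ring
  exact h.congr_of_eventuallyEq hev

lemma deriv_aseq1 (ha : ContDiffOn ℝ 5 a (Set.Ioi 0)) {s : ℝ} (hs : s ∈ U a) :
    deriv (aseq a 1) s =
      (3 * (deriv (deriv a) s) ^ 2 - deriv a s * deriv (deriv (deriv a)) s)
        / (deriv a s) ^ 4 := (haseq1 ha hs).deriv

lemma aseq2_eq (ha : ContDiffOn ℝ 5 a (Set.Ioi 0)) {s : ℝ} (hs : s ∈ U a) :
    aseq a 2 s = (3 * (deriv (deriv a) s) ^ 2 - deriv a s * deriv (deriv (deriv a)) s)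
        / (deriv a s) ^ 5 := by
  show deriv (aseq a 1) s / deriv a s = _
  rw [deriv_aseq1 ha hs, div_div, ← pow_succ]

lemma haseq2 (ha : ContDiffOn ℝ 5 a (Set.Ioi 0)) {s : ℝ} (hs : s ∈ U a) :
    HasDerivAt (aseq a 2)
      ((10 * deriv a s * deriv (deriv a) s * deriv (deriv (deriv a)) s
          - (deriv a s) ^ 2 * deriv (deriv (deriv (deriv a))) s
          - 15 * (deriv (deriv a) s) ^ 3) / (deriv a s) ^ 6) s := by
  have hev : aseq a 2 =ᶠ[nhds s]
      (fun t => (3 * (deriv (deriv a) t) ^ 2 - deriv a t * deriv (deriv (deriv a)) t)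
        / (deriv a t) ^ 5) := by
    filter_upwards [U_mem_nhds ha hs] with t ht using aseq2_eq ha ht
  have h : HasDerivAt (fun t => (3 * (deriv (deriv a) t) ^ 2
        - deriv a t * deriv (deriv (deriv a)) t) / (deriv a t) ^ 5)
      ((10 * deriv a s * deriv (deriv a) s * deriv (deriv (deriv a)) s
          - (deriv a s) ^ 2 * deriv (deriv (deriv (deriv a))) s
          - 15 * (deriv (deriv a) s) ^ 3) / (deriv a s) ^ 6) s := by
    have hnum : HasDerivAt (fun t => 3 * (deriv (deriv a) t) ^ 2
        - deriv a t * deriv (deriv (deriv a)) t)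
        (3 * (2 * (deriv (deriv a) s) ^ 1 * deriv (deriv (deriv a)) s)
          - (deriv (deriv a) s * deriv (deriv (deriv a)) s
            + deriv a s * deriv (deriv (deriv (deriv a))) s)) s := by
      exact (((hd3 ha hs.1).pow 2).const_mul 3).sub ((hd2 ha hs.1).mul (hd4 ha hs.1))
    have hd := hnum.div ((hd2 ha hs.1).pow 5) (pow_ne_zero 5 hs.2)
    refine hd.congr_deriv ?_
    simp only [Pi.pow_apply, Pi.neg_apply, Nat.cast_ofNat]
    field_simp [hs.2]
    ring
  exact h.congr_of_eventuallyEq hev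

lemma deriv_aseq2 (ha : ContDiffOn ℝ 5 a (Set.Ioi 0)) {s : ℝ} (hs : s ∈ U a) :
    deriv (aseq a 2) s =
      (10 * deriv a s * deriv (deriv a) s * deriv (deriv (deriv a)) s
          - (deriv a s) ^ 2 * deriv (deriv (deriv (deriv a))) s
          - 15 * (deriv (deriv a) s) ^ 3) / (deriv a s) ^ 6 := (haseq2 ha hs).deriv

lemma aseq3_eq (ha : ContDiffOn ℝ 5 a (Set.Ioi 0)) {s : ℝ} (hs : s ∈ U a) :
    aseq a 3 s = (10 * deriv a s * deriv (deriv a) s * deriv (deriv (deriv a)) s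
          - (deriv a s) ^ 2 * deriv (deriv (deriv (deriv a))) s
          - 15 * (deriv (deriv a) s) ^ 3) / (deriv a s) ^ 7 := by
  show deriv (aseq a 2) s / deriv a s = _
  rw [deriv_aseq2 ha hs, div_div, ← pow_succ]

lemma haseq3 (ha : ContDiffOn ℝ 5 a (Set.Ioi 0)) {s : ℝ} (hs : s ∈ U a) :
    HasDerivAt (aseq a 3) (deriv (aseq a 3) s) s := by
  have hev : aseq a 3 =ᶠ[nhds s]
      (fun t => (10 * deriv a t * deriv (deriv a) t * deriv (deriv (deriv a)) t
          - (deriv a t) ^ 2 * deriv (deriv (deriv (deriv a))) t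
          - 15 * (deriv (deriv a) t) ^ 3) / (deriv a t) ^ 7) := by
    filter_upwards [U_mem_nhds ha hs] with t ht using aseq3_eq ha ht
  have dA1 := (hd2 ha hs.1).differentiableAt
  have dA2 := (hd3 ha hs.1).differentiableAt
  have dA3 := (hd4 ha hs.1).differentiableAt
  have dA4 := (hd5 ha hs.1).differentiableAt
  have hdiff : DifferentiableAt ℝ (fun t => (10 * deriv a t * deriv (deriv a) t
          * deriv (deriv (deriv a)) t
          - (deriv a t) ^ 2 * deriv (deriv (deriv (deriv a))) t
          - 15 * (deriv (deriv a) t) ^ 3) / (deriv a t) ^ 7) s := by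
    exact (((((differentiableAt_const 10).mul dA1).mul dA2).mul dA3).sub
        ((dA1.pow 2).mul dA4)).sub ((differentiableAt_const 15).mul (dA2.pow 3)) |>.div
      (dA1.pow 7) (pow_ne_zero 7 hs.2)
  exact (hev.differentiableAt_iff.2 hdiff).hasDerivAt

lemma deriv_aseq_eq (n : ℕ) {s : ℝ} (hs : deriv a s ≠ 0) :
    deriv (aseq a n) s = deriv a s * aseq a (n + 1) s := by
  show deriv (aseq a n) s = deriv a s * (deriv (aseq a n) s / deriv a s)
  field_simp


lemma haseq3' (ha : ContDiffOn ℝ 5 a (Set.Ioi 0)) {s : ℝ} (hs : s ∈ U a) :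
    HasDerivAt (aseq a 2) (deriv (aseq a 2) s) s := (haseq2 ha hs).differentiableAt.hasDerivAt

lemma intExp (ha : ContDiffOn ℝ 5 a (Set.Ioi 0)) {M s : ℝ} (hM : 0 < M)
    (hM1 : ∀ t, M ≤ t → 1 ≤ deriv a t) (hs : M ≤ s) :
    IntegrableOn (fun t => Real.exp (-(a t))) (Set.Ioi s) := by
  have hs0 : 0 < s := lt_of_lt_of_le hM hs
  have hmono : MonotoneOn (fun t => a t - t) (Set.Ici s) := by
    apply monotoneOn_of_deriv_nonneg (convex_Ici s)
    · exact (ha.continuousOn.mono (fun t ht => lt_of_lt_of_le hs0 ht)).sub continuousOn_id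
    · intro t ht
      rw [interior_Ici] at ht
      have ht0 : 0 < t := lt_trans hs0 ht
      exact (((ha.differentiableOn (by norm_num)).differentiableAt
        (Ioi_mem_nhds ht0)).sub differentiableAt_id).differentiableWithinAt
    · intro t ht
      rw [interior_Ici] at ht
      have ht0 : 0 < t := lt_trans hs0 ht
      have hda : HasDerivAt a (deriv a t) t :=
        ((ha.differentiableOn (by norm_num)).differentiableAt (Ioi_mem_nhds ht0)).hasDerivAt
      have hsub : HasDerivAt (fun u => a u - u) (deriv a t - 1) t := by
        exact hda.sub (hasDerivAt_id t)
      rw [hsub.deriv]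
      have := hM1 t (le_trans hs (le_of_lt ht))
      linarith
  have hbound : ∀ t ∈ Set.Ioi s, Real.exp (-(a t)) ≤ Real.exp (s - a s) * Real.exp (-t) := by
    intro t ht
    rw [← Real.exp_add]
    apply Real.exp_le_exp.2
    have h2 : a s - s ≤ a t - t := hmono (Set.self_mem_Ici) (Set.mem_Ici.2 (le_of_lt ht)) (le_of_lt ht)
    linarith
  have hintg : IntegrableOn (fun t => Real.exp (s - a s) * Real.exp (-t)) (Set.Ioi s) := by
    have := (exp_neg_integrableOn_Ioi s (b := 1) one_pos).const_mul (Real.exp (s - a s))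
    simp only [neg_mul, one_mul] at this
    exact this
  apply Integrable.mono' hintg
  · apply ContinuousOn.aestronglyMeasurable _ measurableSet_Ioi
    exact Real.continuous_exp.comp_continuousOn
      ((ha.continuousOn.mono (fun t ht => lt_trans hs0 ht)).neg)
  · rw [ae_restrict_iff' measurableSet_Ioi]
    filter_upwards with t ht
    rw [Real.norm_eq_abs, abs_of_pos (Real.exp_pos _)]
    exact hbound t ht

lemma intDeriv (f : ℝ → ℝ) (ha : ContDiffOn ℝ 5 a (Set.Ioi 0)) {s : ℝ} (hs0 : 0 < s)
    (habs : IntegrableOn (fun t => |deriv f t| * Real.exp (-(a t))) (Set.Ioi s)) :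
    IntegrableOn (fun t => deriv f t * Real.exp (-(a t))) (Set.Ioi s) := by
  apply Integrable.mono' habs
  · apply AEStronglyMeasurable.mul
    · exact (measurable_deriv f).aestronglyMeasurable.restrict
    · apply ContinuousOn.aestronglyMeasurable _ measurableSet_Ioi
      exact Real.continuous_exp.comp_continuousOn
        ((ha.continuousOn.mono (fun t ht => lt_trans hs0 ht)).neg)
  · filter_upwards with t
    rw [Real.norm_eq_abs, abs_mul, abs_of_pos (Real.exp_pos _)]

lemma ibp_gen {φ ψ : ℝ → ℝ} {s : ℝ}
    (hda : ∀ t, s ≤ t → HasDerivAt a (deriv a t) t)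
    (hφ : ∀ t, s ≤ t → HasDerivAt φ (deriv φ t) t)
    (hrel : ∀ t, s ≤ t → φ t * deriv a t = ψ t)
    (hdec : Tendsto (fun t => φ t * Real.exp (-(a t))) atTop (nhds 0))
    (intψ : IntegrableOn (fun t => ψ t * Real.exp (-(a t))) (Set.Ioi s))
    (intφ' : IntegrableOn (fun t => deriv φ t * Real.exp (-(a t))) (Set.Ioi s)) :
    ∫ t in Set.Ioi s, ψ t * Real.exp (-(a t))
      = φ s * Real.exp (-(a s)) + ∫ t in Set.Ioi s, deriv φ t * Real.exp (-(a t)) := by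
  set g : ℝ → ℝ := fun t => φ t * Real.exp (-(a t)) with hg
  have hexp : ∀ t, s ≤ t → HasDerivAt (fun u => Real.exp (-(a u)))
      (Real.exp (-(a t)) * (-(deriv a t))) t := fun t ht => ((hda t ht).neg).exp
  have hderiv : ∀ x ∈ Set.Ioi s, HasDerivAt g
      (deriv φ x * Real.exp (-(a x)) - ψ x * Real.exp (-(a x))) x := by
    intro x hx
    have hx' : s ≤ x := le_of_lt hx
    have := (hφ x hx').mul (hexp x hx')
    refine this.congr_deriv ?_
    rw [← hrel x hx']
    ring
  have hcont : ContinuousWithinAt g (Set.Ici s) s := by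
    apply ContinuousAt.continuousWithinAt
    exact ((hφ s le_rfl).differentiableAt.continuousAt).mul
      (Real.continuous_exp.continuousAt.comp ((hda s le_rfl).differentiableAt.continuousAt.neg))
  have hint : IntegrableOn (fun x => deriv φ x * Real.exp (-(a x))
      - ψ x * Real.exp (-(a x))) (Set.Ioi s) := intφ'.sub intψ
  have hftc := integral_Ioi_of_hasDerivAt_of_tendsto hcont hderiv hint hdec
  rw [integral_sub intφ' intψ] at hftc
  have : g s = φ s * Real.exp (-(a s)) := rfl
  linarith [hftc]

lemma bound1 (x y w : ℝ) (hw : 0 < w) :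
    |x/w^2 * ((3*x^2 - w*y)/w^4)| ≤ |x*y|/w^5 + 3*|x|^3/w^6 := by
  have h6 : (0:ℝ) < w^6 := pow_pos hw 6
  have heq : x/w^2 * ((3*x^2 - w*y)/w^4) = (3*x^3 - w*(x*y))/w^6 := by
    field_simp
  rw [heq, abs_div, abs_of_pos h6, div_le_iff₀ h6]
  have h1 : |3*x^3 - w*(x*y)| ≤ 3*|x|^3 + w*|x*y| := by
    calc |3*x^3 - w*(x*y)| ≤ |3*x^3| + |w*(x*y)| := abs_sub _ _
    _ = 3*|x|^3 + w*|x*y| := by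
        rw [abs_mul, abs_mul, abs_of_pos hw, abs_pow]
        norm_num
  calc |3*x^3 - w*(x*y)| ≤ 3*|x|^3 + w*|x*y| := h1
  _ ≤ (|x*y|/w^5 + 3*|x|^3/w^6) * w^6 := by
      have : (|x*y|/w^5 + 3*|x|^3/w^6) * w^6 = w * |x*y| + 3*|x|^3 := by field_simp
      rw [this]; nlinarith [abs_nonneg (x*y)]

lemma bound2 (x y z w : ℝ) (hw : 0 < w) :
    |(10*w*x*y - w^2*z - 15*x^3)/w^6| ≤ 10*|x*y|/w^5 + |z|/w^4 + 15*|x|^3/w^6 := by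
  have h6 : (0:ℝ) < w^6 := pow_pos hw 6
  rw [abs_div, abs_of_pos h6, div_le_iff₀ h6]
  have h1 : |10*w*x*y - w^2*z - 15*x^3| ≤ 10*w*|x*y| + w^2*|z| + 15*|x|^3 := by
    calc |10*w*x*y - w^2*z - 15*x^3| ≤ |10*w*x*y - w^2*z| + |15*x^3| := abs_sub _ _
    _ ≤ |10*w*x*y| + |w^2*z| + |15*x^3| := by
        have := abs_sub (10*w*x*y) (w^2*z); linarith
    _ = 10*w*|x*y| + w^2*|z| + 15*|x|^3 := by
        rw [show 10*w*x*y = 10*w*(x*y) by ring, abs_mul (10*w), abs_mul (w^2), abs_mul 15,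
          abs_of_pos (by positivity : (0:ℝ) < 10*w), abs_of_pos (by positivity : (0:ℝ) < w^2),
          abs_pow]
        norm_num
  calc |10*w*x*y - w^2*z - 15*x^3| ≤ 10*w*|x*y| + w^2*|z| + 15*|x|^3 := h1
  _ ≤ (10*|x*y|/w^5 + |z|/w^4 + 15*|x|^3/w^6) * w^6 := by
      have : (10*|x*y|/w^5 + |z|/w^4 + 15*|x|^3/w^6) * w^6
          = 10 * w * |x*y| + w^2 * |z| + 15*|x|^3 := by field_simp
      rw [this]

end aux

set_option maxHeartbeats 2000000 in
/-- Lemma 3.1, parts (3.7b) and (3.8b): asymptotic expansions of `f'(s)F(s)` and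
of `f(s)f''(s)F(s)/f'(s)` for `f = e^a`, `F(s) = ∫_s^∞ e^{−a(t)} dt`, under
hypotheses (A). -/
theorem stmt13 (a : ℝ → ℝ)
    (ha : ContDiffOn ℝ 5 a (Set.Ioi 0))
    (hatop : Tendsto a atTop atTop)
    (ha'top : Tendsto (deriv a) atTop atTop)
    (hdecay : ∀ n < 4, Tendsto (fun s => aseq a n s * Real.exp (-(a s))) atTop (nhds 0))
    (hint : ∀ n < 4, ∀ s > (0 : ℝ),
      IntegrableOn (fun t => |deriv (aseq a n) t| * Real.exp (-(a t))) (Set.Ioi s))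
    (hne : ∀ n < 4, ∃ s₁ > (0 : ℝ), ∀ s ≥ s₁, aseq a n s ≠ 0)
    (hratio : ∀ n < 4, Tendsto (fun s => aseq a (n + 1) s / aseq a n s) atTop (nhds 0)) :
    Tendsto (fun s =>
        (deriv (fun x => Real.exp (a x)) s * (∫ t in Set.Ioi s, Real.exp (-(a t))) - 1
            + deriv (deriv a) s / (deriv a s) ^ 2) * (deriv a s) ^ 4
          / (3 * (deriv (deriv a) s) ^ 2 - deriv a s * deriv (deriv (deriv a)) s))
      atTop (nhds 1)
    ∧ ∃ C > (0 : ℝ), ∃ s₂ > (0 : ℝ), ∀ s ≥ s₂,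
        |Real.exp (a s) * deriv (deriv (fun x => Real.exp (a x))) s
              * (∫ t in Set.Ioi s, Real.exp (-(a t))) / deriv (fun x => Real.exp (a x)) s
            - 1 - (2 * (deriv (deriv a) s) ^ 2 - deriv a s * deriv (deriv (deriv a)) s)
              / (deriv a s) ^ 4|
          ≤ C * (|deriv (deriv a) s * deriv (deriv (deriv a)) s| / (deriv a s) ^ 5
              + |deriv (deriv (deriv (deriv a))) s| / (deriv a s) ^ 4
              + |deriv (deriv a) s| ^ 3 / (deriv a s) ^ 6) := by
  classical
  -- thresholds
  obtain ⟨M0, hM0⟩ := eventually_atTop.1 (ha'top.eventually_ge_atTop 1)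
  obtain ⟨s2ne, hs2pos, hs2⟩ := hne 2 (by norm_num)
  obtain ⟨s3ne, hs3pos, hs3⟩ := hne 3 (by norm_num)
  obtain ⟨N0, hN0⟩ := eventually_atTop.1
    ((NormedAddCommGroup.tendsto_nhds_zero.1 (hratio 0 (by norm_num))) 1 one_pos)
  set M : ℝ := max (max M0 1) (max s2ne (max s3ne N0)) with hMdef
  have hM0M : M0 ≤ M := (le_max_left M0 1).trans (le_max_left _ _)
  have h1M : (1:ℝ) ≤ M := (le_max_right M0 1).trans (le_max_left _ _)
  have hs2M : s2ne ≤ M := (le_max_left s2ne _).trans (le_max_right _ _)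
  have hs3M : s3ne ≤ M := ((le_max_left s3ne N0).trans (le_max_right s2ne _)).trans
    (le_max_right _ _)
  have hN0M : N0 ≤ M := ((le_max_right s3ne N0).trans (le_max_right s2ne _)).trans
    (le_max_right _ _)
  have hMpos : (0:ℝ) < M := lt_of_lt_of_le one_pos h1M
  -- tail facts
  have hA1 : ∀ t, M ≤ t → 1 ≤ deriv a t := fun t ht => hM0 t (hM0M.trans ht)
  have ht0 : ∀ t, M ≤ t → (0:ℝ) < t := fun t ht => lt_of_lt_of_le hMpos ht
  have hA1pos : ∀ t, M ≤ t → (0:ℝ) < deriv a t :=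
    fun t ht => lt_of_lt_of_le one_pos (hA1 t ht)
  have hUmem : ∀ t, M ≤ t → t ∈ U a := fun t ht => ⟨ht0 t ht, ne_of_gt (hA1pos t ht)⟩
  have hb2ne : ∀ t, M ≤ t → aseq a 2 t ≠ 0 := fun t ht => hs2 t (hs2M.trans ht)
  have hb3ne : ∀ t, M ≤ t → aseq a 3 t ≠ 0 := fun t ht => hs3 t (hs3M.trans ht)
  have hA2le : ∀ t, M ≤ t → |deriv (deriv a) t| ≤ (deriv a t)^2 := by
    intro t ht
    have h := hN0 t (hN0M.trans ht)
    rw [Real.norm_eq_abs] at h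
    have hb0 : aseq a 0 t = 1 / deriv a t := rfl
    rw [aseq1_eq ha (hUmem t ht), hb0] at h
    have hw : (0:ℝ) < deriv a t := hA1pos t ht
    have hsimp : (-(deriv (deriv a) t) / deriv a t ^ 3) / (1 / deriv a t)
        = -(deriv (deriv a) t) / (deriv a t)^2 := by
      field_simp
    rw [hsimp, abs_div, abs_neg, abs_of_pos (pow_pos hw 2), div_lt_one (pow_pos hw 2)] at h
    exact le_of_lt h
  -- diff facts for aseq
  have hdbn : ∀ n, n ≤ 3 → ∀ t, M ≤ t → HasDerivAt (aseq a n) (deriv (aseq a n) t) t := by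
    intro n hn t ht
    interval_cases n
    · exact (haseq0 ha (hUmem t ht)).differentiableAt.hasDerivAt
    · exact (haseq1 ha (hUmem t ht)).differentiableAt.hasDerivAt
    · exact (haseq2 ha (hUmem t ht)).differentiableAt.hasDerivAt
    · exact haseq3 ha (hUmem t ht)
  have hdat : ∀ s, M ≤ s → ∀ t, s ≤ t → HasDerivAt a (deriv a t) t :=
    fun s hs t ht => hd1 ha (ht0 t (hs.trans ht))
  -- integrability
  have hie : ∀ s, M ≤ s → IntegrableOn (fun t => Real.exp (-(a t))) (Set.Ioi s) :=
    fun s hs => intExp ha hMpos hA1 hs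
  have hidn : ∀ n, n < 4 → ∀ s, M ≤ s →
      IntegrableOn (fun t => deriv (aseq a n) t * Real.exp (-(a t))) (Set.Ioi s) :=
    fun n hn s hs => intDeriv (aseq a n) ha (ht0 s hs) (hint n hn s (ht0 s hs))
  -- integration by parts steps
  have istep : ∀ n, n < 3 → ∀ s, M ≤ s →
      (∫ t in Set.Ioi s, deriv (aseq a n) t * Real.exp (-(a t)))
        = aseq a (n+1) s * Real.exp (-(a s))
          + ∫ t in Set.Ioi s, deriv (aseq a (n+1)) t * Real.exp (-(a t)) := by
    intro n hn s hs
    refine ibp_gen (hdat s hs) (fun t ht => hdbn (n+1) (by omega) t (hs.trans ht))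
      (fun t ht => div_mul_cancel₀ _ (hUmem t (hs.trans ht)).2)
      (hdecay (n+1) (by omega)) (hidn n (by omega) s hs) (hidn (n+1) (by omega) s hs)
  have ibase : ∀ s, M ≤ s →
      (∫ t in Set.Ioi s, Real.exp (-(a t)))
        = aseq a 0 s * Real.exp (-(a s))
          + ∫ t in Set.Ioi s, deriv (aseq a 0) t * Real.exp (-(a t)) := by
    intro s hs
    have h := ibp_gen (φ := aseq a 0) (ψ := fun _ => (1:ℝ)) (hdat s hs)
      (fun t ht => hdbn 0 (by omega) t (hs.trans ht))
      (fun t ht => one_div_mul_cancel (hUmem t (hs.trans ht)).2)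
      (hdecay 0 (by omega)) (by simpa using hie s hs) (hidn 0 (by omega) s hs)
    simpa using h
  have key : ∀ s, M ≤ s →
      (∫ t in Set.Ioi s, Real.exp (-(a t)))
        = (aseq a 0 s + aseq a 1 s + aseq a 2 s + aseq a 3 s) * Real.exp (-(a s))
          + ∫ t in Set.Ioi s, deriv (aseq a 3) t * Real.exp (-(a t)) := by
    intro s hs
    have h0 := ibase s hs
    have h1 := istep 0 (by norm_num) s hs
    have h2 := istep 1 (by norm_num) s hs
    have h3 := istep 2 (by norm_num) s hs
    rw [h0, h1, h2, h3]; ring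
  -- sign constancy of aseq a 3 on [M, ∞)
  have hsign : (∀ t, M ≤ t → 0 < aseq a 3 t) ∨ (∀ t, M ≤ t → aseq a 3 t < 0) := by
    have hcont : ∀ t, M ≤ t → ContinuousAt (aseq a 3) t :=
      fun t ht => (hdbn 3 le_rfl t ht).differentiableAt.continuousAt
    rcases (hb3ne M le_rfl).lt_or_gt with hneg|hpos
    · right
      intro t ht
      by_contra hnp
      push_neg at hnp
      have hpos' : 0 < aseq a 3 t := lt_of_le_of_ne hnp (Ne.symm (hb3ne t ht))
      have hIVT := intermediate_value_Icc ht
        (fun u hu => (hcont u hu.1).continuousWithinAt)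
      have h0 : (0:ℝ) ∈ Set.Icc (aseq a 3 M) (aseq a 3 t) := ⟨le_of_lt hneg, le_of_lt hpos'⟩
      obtain ⟨u, hu, hu0⟩ := hIVT h0
      exact hb3ne u hu.1 hu0
    · left
      intro t ht
      by_contra hnp
      push_neg at hnp
      have hneg' : aseq a 3 t < 0 := lt_of_le_of_ne hnp (hb3ne t ht)
      have hIVT := intermediate_value_Icc' ht
        (fun u hu => (hcont u hu.1).continuousWithinAt)
      have h0 : (0:ℝ) ∈ Set.Icc (aseq a 3 t) (aseq a 3 M) := ⟨le_of_lt hneg', le_of_lt hpos⟩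
      obtain ⟨u, hu, hu0⟩ := hIVT h0
      exact hb3ne u hu.1 hu0
  -- eventual smallness of aseq a 4 vs aseq a 3
  have habs43 : ∀ δ : ℝ, 0 < δ → ∃ S, M ≤ S ∧ ∀ t, S ≤ t →
      |aseq a 4 t| ≤ δ * |aseq a 3 t| := by
    intro δ hδ
    obtain ⟨N, hN⟩ := eventually_atTop.1
      ((NormedAddCommGroup.tendsto_nhds_zero.1 (hratio 3 (by norm_num))) δ hδ)
    refine ⟨max M N, le_max_left _ _, fun t ht => ?_⟩
    have htM : M ≤ t := (le_max_left M N).trans ht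
    have h := hN t ((le_max_right M N).trans ht)
    rw [Real.norm_eq_abs, abs_div] at h
    have h3 : (0:ℝ) < |aseq a 3 t| := abs_pos.2 (hb3ne t htM)
    calc |aseq a 4 t| = |aseq a 4 t| / |aseq a 3 t| * |aseq a 3 t| := by field_simp
    _ ≤ δ * |aseq a 3 t| := by
        apply mul_le_mul_of_nonneg_right (le_of_lt h) (le_of_lt h3)
  -- remainder bound
  have hremb : ∀ ε : ℝ, 0 < ε → ∀ S, M ≤ S → (∀ t, S ≤ t → |aseq a 4 t| ≤ ε * |aseq a 3 t|) →
      ∀ s, S ≤ s → |∫ t in Set.Ioi s, deriv (aseq a 3) t * Real.exp (-(a t))|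
        ≤ ε * (|aseq a 3 s| * Real.exp (-(a s)))
          + ε * |∫ t in Set.Ioi s, deriv (aseq a 3) t * Real.exp (-(a t))| := by
    intro ε hε S hMS hpt s hSs
    have hMs : M ≤ s := hMS.trans hSs
    have hs0 : 0 < s := ht0 s hMs
    have hI2 := istep 2 (by norm_num) s hMs
    have hptw : ∀ t ∈ Set.Ioi s, |deriv (aseq a 3) t| * Real.exp (-(a t))
        ≤ ε * (|deriv (aseq a 2) t| * Real.exp (-(a t))) := by
      intro t ht
      have htM : M ≤ t := hMs.trans (le_of_lt ht)
      have h3 : deriv (aseq a 3) t = deriv a t * aseq a 4 t := deriv_aseq_eq 3 (hUmem t htM).2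
      have h2 : deriv (aseq a 2) t = deriv a t * aseq a 3 t := deriv_aseq_eq 2 (hUmem t htM).2
      have hwpos : 0 < deriv a t := hA1pos t htM
      have h4 := hpt t (hSs.trans (le_of_lt ht))
      rw [h3, h2, abs_mul, abs_mul, abs_of_pos hwpos,
        show ε * (deriv a t * |aseq a 3 t| * Real.exp (-(a t)))
          = deriv a t * (ε * |aseq a 3 t|) * Real.exp (-(a t)) from by ring]
      exact mul_le_mul_of_nonneg_right (mul_le_mul_of_nonneg_left h4 hwpos.le)
        (Real.exp_pos _).le
    have heqnorm : ∀ t : ℝ, ‖deriv (aseq a 3) t * Real.exp (-(a t))‖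
        = |deriv (aseq a 3) t| * Real.exp (-(a t)) := fun t => by
      rw [Real.norm_eq_abs, abs_mul, abs_of_pos (Real.exp_pos _)]
    have habs3 : |∫ t in Set.Ioi s, deriv (aseq a 3) t * Real.exp (-(a t))|
        ≤ ε * ∫ t in Set.Ioi s, |deriv (aseq a 2) t| * Real.exp (-(a t)) := by
      calc |∫ t in Set.Ioi s, deriv (aseq a 3) t * Real.exp (-(a t))|
          = ‖∫ t in Set.Ioi s, deriv (aseq a 3) t * Real.exp (-(a t))‖ :=
            (Real.norm_eq_abs _).symm
      _ ≤ ∫ t in Set.Ioi s, ‖deriv (aseq a 3) t * Real.exp (-(a t))‖ :=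
            norm_integral_le_integral_norm _
      _ = ∫ t in Set.Ioi s, |deriv (aseq a 3) t| * Real.exp (-(a t)) := by
            simp only [heqnorm]
      _ ≤ ∫ t in Set.Ioi s, ε * (|deriv (aseq a 2) t| * Real.exp (-(a t))) := by
            apply setIntegral_mono_on (hint 3 (by norm_num) s hs0)
              ((hint 2 (by norm_num) s hs0).const_mul ε) measurableSet_Ioi
            exact hptw
      _ = ε * ∫ t in Set.Ioi s, |deriv (aseq a 2) t| * Real.exp (-(a t)) := by
            rw [integral_const_mul]
    have hRabs := le_abs_self (∫ t in Set.Ioi s, deriv (aseq a 3) t * Real.exp (-(a t)))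
    have hRabs' := neg_abs_le (∫ t in Set.Ioi s, deriv (aseq a 3) t * Real.exp (-(a t)))
    have hepos := (Real.exp_pos (-(a s))).le
    rcases hsign with hp|hn
    · have hEq : Set.EqOn (fun t => |deriv (aseq a 2) t| * Real.exp (-(a t)))
          (fun t => deriv (aseq a 2) t * Real.exp (-(a t))) (Set.Ioi s) := by
        intro t ht
        have htM : M ≤ t := hMs.trans (le_of_lt ht)
        have h2 : deriv (aseq a 2) t = deriv a t * aseq a 3 t :=
          deriv_aseq_eq 2 (hUmem t htM).2
        have hpos2 : 0 < deriv (aseq a 2) t := by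
          rw [h2]; exact mul_pos (hA1pos t htM) (hp t htM)
        simp only [abs_of_pos hpos2]
      have hXI : (∫ t in Set.Ioi s, |deriv (aseq a 2) t| * Real.exp (-(a t)))
          = aseq a 3 s * Real.exp (-(a s))
            + ∫ t in Set.Ioi s, deriv (aseq a 3) t * Real.exp (-(a t)) := by
        rw [setIntegral_congr_fun measurableSet_Ioi hEq]; exact hI2
      rw [hXI] at habs3
      have hb3abs : aseq a 3 s = |aseq a 3 s| := (abs_of_pos (hp s hMs)).symm
      have h5 : ε * (aseq a 3 s * Real.exp (-(a s))
            + ∫ t in Set.Ioi s, deriv (aseq a 3) t * Real.exp (-(a t)))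
          = ε * (aseq a 3 s * Real.exp (-(a s)))
            + ε * ∫ t in Set.Ioi s, deriv (aseq a 3) t * Real.exp (-(a t)) := by ring
      have h6 := mul_le_mul_of_nonneg_left hRabs hε.le
      have h7 : ε * (aseq a 3 s * Real.exp (-(a s)))
          = ε * (|aseq a 3 s| * Real.exp (-(a s))) := by rw [← hb3abs]
      linarith
    · have hEq : Set.EqOn (fun t => |deriv (aseq a 2) t| * Real.exp (-(a t)))
          (fun t => -(deriv (aseq a 2) t * Real.exp (-(a t)))) (Set.Ioi s) := by
        intro t ht
        have htM : M ≤ t := hMs.trans (le_of_lt ht)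
        have h2 : deriv (aseq a 2) t = deriv a t * aseq a 3 t :=
          deriv_aseq_eq 2 (hUmem t htM).2
        have hpos2 : deriv (aseq a 2) t < 0 := by
          rw [h2]
          exact mul_neg_of_pos_of_neg (hA1pos t htM) (hn t htM)
        simp only []
        rw [abs_of_neg hpos2]
        ring
      have hXI : (∫ t in Set.Ioi s, |deriv (aseq a 2) t| * Real.exp (-(a t)))
          = -(aseq a 3 s * Real.exp (-(a s))
            + ∫ t in Set.Ioi s, deriv (aseq a 3) t * Real.exp (-(a t))) := by
        rw [setIntegral_congr_fun measurableSet_Ioi hEq, integral_neg, hI2]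
      rw [hXI] at habs3
      have hb3abs : -(aseq a 3 s) = |aseq a 3 s| := (abs_of_neg (hn s hMs)).symm
      have h5 : ε * (-(aseq a 3 s * Real.exp (-(a s))
            + ∫ t in Set.Ioi s, deriv (aseq a 3) t * Real.exp (-(a t))))
          = ε * (-(aseq a 3 s) * Real.exp (-(a s)))
            + ε * -(∫ t in Set.Ioi s, deriv (aseq a 3) t * Real.exp (-(a t))) := by ring
      have h6 := mul_le_mul_of_nonneg_left hRabs' hε.le
      have h6' : ε * -(|∫ t in Set.Ioi s, deriv (aseq a 3) t * Real.exp (-(a t))|)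
          = -(ε * |∫ t in Set.Ioi s, deriv (aseq a 3) t * Real.exp (-(a t))|) := by ring
      have h6'' : ε * -(∫ t in Set.Ioi s, deriv (aseq a 3) t * Real.exp (-(a t)))
          ≤ ε * |∫ t in Set.Ioi s, deriv (aseq a 3) t * Real.exp (-(a t))| := by nlinarith
      have h7 : ε * (-(aseq a 3 s) * Real.exp (-(a s)))
          = ε * (|aseq a 3 s| * Real.exp (-(a s))) := by rw [← hb3abs]
      linarith
  -- main identity
  have hfd : ∀ s, 0 < s → deriv (fun x => Real.exp (a x)) s
      = Real.exp (a s) * deriv a s := fun s hs => ((hd1 ha hs).exp).deriv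
  have hmain : ∀ s, M ≤ s →
      deriv (fun x => Real.exp (a x)) s * (∫ t in Set.Ioi s, Real.exp (-(a t))) - 1
          + deriv (deriv a) s / (deriv a s) ^ 2
        = deriv a s * aseq a 2 s + deriv a s * aseq a 3 s
          + deriv a s * Real.exp (a s)
            * ∫ t in Set.Ioi s, deriv (aseq a 3) t * Real.exp (-(a t)) := by
    intro s hs
    have hU := hUmem s hs
    have hw : (0:ℝ) < deriv a s := hA1pos s hs
    have hb0 : aseq a 0 s = 1 / deriv a s := rfl
    rw [hfd s (ht0 s hs), key s hs, hb0, aseq1_eq ha hU, Real.exp_neg]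
    field_simp
    ring
  have hb2X : ∀ s, M ≤ s → 3 * (deriv (deriv a) s) ^ 2 - deriv a s * deriv (deriv (deriv a)) s
      = aseq a 2 s * (deriv a s)^5 := by
    intro s hs
    rw [aseq2_eq ha (hUmem s hs), div_mul_cancel₀ _ (pow_ne_zero 5 (hA1pos s hs).ne')]
  have hexpr : ∀ s, M ≤ s →
      (deriv (fun x => Real.exp (a x)) s * (∫ t in Set.Ioi s, Real.exp (-(a t))) - 1
            + deriv (deriv a) s / (deriv a s) ^ 2) * (deriv a s) ^ 4
          / (3 * (deriv (deriv a) s) ^ 2 - deriv a s * deriv (deriv (deriv a)) s)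
        = 1 + (aseq a 3 s / aseq a 2 s
            + Real.exp (a s) * (∫ t in Set.Ioi s, deriv (aseq a 3) t * Real.exp (-(a t)))
              / aseq a 2 s) := by
    intro s hs
    rw [hmain s hs, hb2X s hs]
    have hw : (0:ℝ) < deriv a s := hA1pos s hs
    have h2 := hb2ne s hs
    field_simp
    ring
  have T1 : Tendsto (fun s => aseq a 3 s / aseq a 2 s) atTop (nhds 0) := hratio 2 (by norm_num)
  have T2 : Tendsto (fun s => Real.exp (a s)
      * (∫ t in Set.Ioi s, deriv (aseq a 3) t * Real.exp (-(a t))) / aseq a 2 s)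
      atTop (nhds 0) := by
    rw [NormedAddCommGroup.tendsto_nhds_zero]
    intro ε hε
    set ε' : ℝ := min (ε/4) (1/2) with hε'def
    have hε'pos : 0 < ε' := lt_min (by linarith) (by norm_num)
    have hε'le : ε' ≤ 1/2 := min_le_right _ _
    have hε'ε : ε' ≤ ε/4 := min_le_left _ _
    obtain ⟨S, hMS, hS⟩ := habs43 ε' hε'pos
    obtain ⟨N2, hN2⟩ := eventually_atTop.1
      ((NormedAddCommGroup.tendsto_nhds_zero.1 T1) 1 one_pos)
    rw [eventually_atTop]
    refine ⟨max S N2, fun s hs => ?_⟩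
    have hSs : S ≤ s := (le_max_left _ _).trans hs
    have hMs : M ≤ s := hMS.trans hSs
    have hR := hremb ε' hε'pos S hMS hS s hSs
    have hRnn := abs_nonneg (∫ t in Set.Ioi s, deriv (aseq a 3) t * Real.exp (-(a t)))
    have hb3nn := mul_nonneg (abs_nonneg (aseq a 3 s)) (Real.exp_pos (-(a s))).le
    have hRle : |∫ t in Set.Ioi s, deriv (aseq a 3) t * Real.exp (-(a t))|
        ≤ 2 * ε' * (|aseq a 3 s| * Real.exp (-(a s))) := by nlinarith
    have hratio2 := hN2 s ((le_max_right _ _).trans hs)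
    rw [Real.norm_eq_abs] at hratio2 ⊢
    have hb2pos : 0 < |aseq a 2 s| := abs_pos.2 (hb2ne s hMs)
    have habs : |Real.exp (a s) * (∫ t in Set.Ioi s, deriv (aseq a 3) t * Real.exp (-(a t)))
          / aseq a 2 s|
        = Real.exp (a s) * |∫ t in Set.Ioi s, deriv (aseq a 3) t * Real.exp (-(a t))|
          / |aseq a 2 s| := by
      rw [abs_div, abs_mul, abs_of_pos (Real.exp_pos _)]
    rw [habs, div_lt_iff₀ hb2pos]
    have hb3b2 : |aseq a 3 s| ≤ |aseq a 2 s| := by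
      rw [← div_le_one hb2pos, ← abs_div]
      exact le_of_lt hratio2
    have he1 : Real.exp (a s) * Real.exp (-(a s)) = 1 := by
      rw [← Real.exp_add]; simp
    have hstep1 : Real.exp (a s) * |∫ t in Set.Ioi s, deriv (aseq a 3) t * Real.exp (-(a t))|
        ≤ 2 * ε' * |aseq a 3 s| := by
      have h1 := mul_le_mul_of_nonneg_left hRle (Real.exp_pos (a s)).le
      have h2 : Real.exp (a s) * (2 * ε' * (|aseq a 3 s| * Real.exp (-(a s))))
          = 2 * ε' * |aseq a 3 s| * (Real.exp (a s) * Real.exp (-(a s))) := by ring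
      rw [h2, he1, mul_one] at h1
      exact h1
    have hstep2 : 2 * ε' * |aseq a 3 s| ≤ 2 * ε' * |aseq a 2 s| :=
      mul_le_mul_of_nonneg_left hb3b2 (by linarith)
    nlinarith
  constructor
  · have hev : (fun s => 1 + (aseq a 3 s / aseq a 2 s
        + Real.exp (a s) * (∫ t in Set.Ioi s, deriv (aseq a 3) t * Real.exp (-(a t)))
          / aseq a 2 s)) =ᶠ[atTop]
        (fun s => (deriv (fun x => Real.exp (a x)) s
              * (∫ t in Set.Ioi s, Real.exp (-(a t))) - 1
            + deriv (deriv a) s / (deriv a s) ^ 2) * (deriv a s) ^ 4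
          / (3 * (deriv (deriv a) s) ^ 2 - deriv a s * deriv (deriv (deriv a)) s)) := by
      filter_upwards [eventually_ge_atTop M] with s hs using (hexpr s hs).symm
    have hT : Tendsto (fun s => 1 + (aseq a 3 s / aseq a 2 s
        + Real.exp (a s) * (∫ t in Set.Ioi s, deriv (aseq a 3) t * Real.exp (-(a t)))
          / aseq a 2 s)) atTop (nhds (1 + (0 + 0))) :=
      tendsto_const_nhds.add (T1.add T2)
    norm_num at hT
    exact hT.congr' hev
  · obtain ⟨S3, hMS3, hS3⟩ := habs43 (1/2) (by norm_num)
    refine ⟨100, by norm_num, S3, lt_of_lt_of_le hMpos hMS3, ?_⟩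
    intro s hs
    have hMs : M ≤ s := hMS3.trans hs
    have hs0 : 0 < s := ht0 s hMs
    have hw : (0:ℝ) < deriv a s := hA1pos s hMs
    have he1 : Real.exp (a s) * Real.exp (-(a s)) = 1 := by rw [← Real.exp_add]; simp
    have hR := hremb (1/2) (by norm_num) S3 hMS3 hS3 s hs
    have hRnn := abs_nonneg (∫ t in Set.Ioi s, deriv (aseq a 3) t * Real.exp (-(a t)))
    have hRle : |∫ t in Set.Ioi s, deriv (aseq a 3) t * Real.exp (-(a t))|
        ≤ |aseq a 3 s| * Real.exp (-(a s)) := by linarith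
    have hf2 : deriv (deriv (fun x => Real.exp (a x))) s
        = Real.exp (a s) * ((deriv a s)^2 + deriv (deriv a) s) := by
      have hev2 : deriv (fun x => Real.exp (a x)) =ᶠ[nhds s]
          (fun t => Real.exp (a t) * deriv a t) := by
        filter_upwards [Ioi_mem_nhds hs0] with t ht using hfd t ht
      rw [hev2.deriv_eq]
      have h := ((hd1 ha hs0).exp).mul (hd2 ha hs0)
      rw [show deriv (fun t => Real.exp (a t) * deriv a t) s = _ from h.deriv]
      ring
    have hP : deriv a s * aseq a 2 s
        = (3 * (deriv (deriv a) s)^2 - deriv a s * deriv (deriv (deriv a)) s)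
          / (deriv a s)^4 := by
      rw [aseq2_eq ha (hUmem s hMs)]
      field_simp
    have hQ : deriv a s * aseq a 3 s
        = (10 * deriv a s * deriv (deriv a) s * deriv (deriv (deriv a)) s
          - (deriv a s)^2 * deriv (deriv (deriv (deriv a))) s
          - 15 * (deriv (deriv a) s)^3) / (deriv a s)^6 := by
      rw [← deriv_aseq_eq 2 (hUmem s hMs).2]
      exact deriv_aseq2 ha (hUmem s hMs)
    have hFf := hmain s hMs
    rw [hfd s hs0] at hFf
    have hFeq : (∫ t in Set.Ioi s, Real.exp (-(a t)))
        = (1 - deriv (deriv a) s / (deriv a s)^2 + (deriv a s * aseq a 2 s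
            + deriv a s * aseq a 3 s + deriv a s * Real.exp (a s)
              * ∫ t in Set.Ioi s, deriv (aseq a 3) t * Real.exp (-(a t))))
          / (Real.exp (a s) * deriv a s) := by
      rw [eq_div_iff (by positivity)]
      linear_combination hFf
    have hID : Real.exp (a s) * deriv (deriv (fun x => Real.exp (a x))) s
          * (∫ t in Set.Ioi s, Real.exp (-(a t))) / deriv (fun x => Real.exp (a x)) s
        - 1 - (2 * (deriv (deriv a) s) ^ 2 - deriv a s * deriv (deriv (deriv a)) s)
          / (deriv a s) ^ 4
      = deriv (deriv a) s / (deriv a s)^2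
          * ((3 * (deriv (deriv a) s)^2 - deriv a s * deriv (deriv (deriv a)) s)
            / (deriv a s)^4)
        + (1 + deriv (deriv a) s / (deriv a s)^2)
          * (deriv a s * aseq a 3 s + deriv a s * Real.exp (a s)
            * ∫ t in Set.Ioi s, deriv (aseq a 3) t * Real.exp (-(a t))) := by
      rw [hf2, hfd s hs0, hFeq, hP]
      have hexpne := (Real.exp_pos (a s)).ne'
      field_simp
      ring
    rw [hID]
    have hB1 := bound1 (deriv (deriv a) s) (deriv (deriv (deriv a)) s) (deriv a s) hw
    have hB2 := bound2 (deriv (deriv a) s) (deriv (deriv (deriv a)) s)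
      (deriv (deriv (deriv (deriv a))) s) (deriv a s) hw
    have hQb : |deriv a s * aseq a 3 s|
        ≤ 10 * |deriv (deriv a) s * deriv (deriv (deriv a)) s| / (deriv a s)^5
          + |deriv (deriv (deriv (deriv a))) s| / (deriv a s)^4
          + 15 * |deriv (deriv a) s|^3 / (deriv a s)^6 := by
      rw [hQ]; exact hB2
    have hE : |deriv a s * Real.exp (a s)
          * ∫ t in Set.Ioi s, deriv (aseq a 3) t * Real.exp (-(a t))|
        ≤ |deriv a s * aseq a 3 s| := by
      rw [abs_mul, abs_mul (deriv a s), abs_of_pos hw, abs_of_pos (Real.exp_pos _),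
        abs_mul (deriv a s), abs_of_pos hw]
      have h1 : Real.exp (a s) * |∫ t in Set.Ioi s, deriv (aseq a 3) t * Real.exp (-(a t))|
          ≤ |aseq a 3 s| := by
        have h2 := mul_le_mul_of_nonneg_left hRle (Real.exp_pos (a s)).le
        have h3 : Real.exp (a s) * (|aseq a 3 s| * Real.exp (-(a s)))
            = |aseq a 3 s| * (Real.exp (a s) * Real.exp (-(a s))) := by ring
        rw [h3, he1, mul_one] at h2
        exact h2
      calc deriv a s * Real.exp (a s)
            * |∫ t in Set.Ioi s, deriv (aseq a 3) t * Real.exp (-(a t))|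
          = deriv a s * (Real.exp (a s)
            * |∫ t in Set.Ioi s, deriv (aseq a 3) t * Real.exp (-(a t))|) := by ring
      _ ≤ deriv a s * |aseq a 3 s| := mul_le_mul_of_nonneg_left h1 hw.le
    have hu : |deriv (deriv a) s / (deriv a s)^2| ≤ 1 := by
      rw [abs_div, abs_of_pos (pow_pos hw 2), div_le_one (pow_pos hw 2)]
      exact hA2le s hMs
    have h1u : |1 + deriv (deriv a) s / (deriv a s)^2| ≤ 2 := by
      calc |1 + deriv (deriv a) s / (deriv a s)^2|
          ≤ |(1:ℝ)| + |deriv (deriv a) s / (deriv a s)^2| := abs_add_le _ _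
      _ ≤ 2 := by rw [abs_one]; linarith
    have hQE : |deriv a s * aseq a 3 s + deriv a s * Real.exp (a s)
          * ∫ t in Set.Ioi s, deriv (aseq a 3) t * Real.exp (-(a t))|
        ≤ |deriv a s * aseq a 3 s| + |deriv a s * Real.exp (a s)
          * ∫ t in Set.Ioi s, deriv (aseq a 3) t * Real.exp (-(a t))| := abs_add_le _ _
    have hsplit : |deriv (deriv a) s / (deriv a s)^2
          * ((3 * (deriv (deriv a) s)^2 - deriv a s * deriv (deriv (deriv a)) s)
            / (deriv a s)^4)
        + (1 + deriv (deriv a) s / (deriv a s)^2)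
          * (deriv a s * aseq a 3 s + deriv a s * Real.exp (a s)
            * ∫ t in Set.Ioi s, deriv (aseq a 3) t * Real.exp (-(a t)))|
        ≤ |deriv (deriv a) s / (deriv a s)^2
          * ((3 * (deriv (deriv a) s)^2 - deriv a s * deriv (deriv (deriv a)) s)
            / (deriv a s)^4)|
          + |1 + deriv (deriv a) s / (deriv a s)^2|
            * |deriv a s * aseq a 3 s + deriv a s * Real.exp (a s)
              * ∫ t in Set.Ioi s, deriv (aseq a 3) t * Real.exp (-(a t))| := by
      calc _ ≤ _ := abs_add_le _ _
      _ = _ := by rw [abs_mul (1 + deriv (deriv a) s / (deriv a s)^2)]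
    have hmul2 : |1 + deriv (deriv a) s / (deriv a s)^2|
          * |deriv a s * aseq a 3 s + deriv a s * Real.exp (a s)
            * ∫ t in Set.Ioi s, deriv (aseq a 3) t * Real.exp (-(a t))|
        ≤ 2 * (|deriv a s * aseq a 3 s| + |deriv a s * Real.exp (a s)
            * ∫ t in Set.Ioi s, deriv (aseq a 3) t * Real.exp (-(a t))|) :=
      mul_le_mul h1u hQE (abs_nonneg _) (by norm_num)
    have hT1nn : (0:ℝ) ≤ |deriv (deriv a) s * deriv (deriv (deriv a)) s| / (deriv a s)^5 := by
      positivity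
    have hT2nn : (0:ℝ) ≤ |deriv (deriv (deriv (deriv a))) s| / (deriv a s)^4 := by positivity
    have hT3nn : (0:ℝ) ≤ |deriv (deriv a) s|^3 / (deriv a s)^6 := by positivity
    have hEQ := hE.trans hQb
    have hfin1 : |deriv a s * aseq a 3 s| + |deriv a s * Real.exp (a s)
          * ∫ t in Set.Ioi s, deriv (aseq a 3) t * Real.exp (-(a t))|
        ≤ 2 * (10 * |deriv (deriv a) s * deriv (deriv (deriv a)) s| / (deriv a s)^5
          + |deriv (deriv (deriv (deriv a))) s| / (deriv a s)^4
          + 15 * |deriv (deriv a) s|^3 / (deriv a s)^6) := by linarith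
    have hstep := hsplit.trans (add_le_add hB1 (hmul2.trans
      (by linarith : 2 * (|deriv a s * aseq a 3 s| + |deriv a s * Real.exp (a s)
          * ∫ t in Set.Ioi s, deriv (aseq a 3) t * Real.exp (-(a t))|)
        ≤ 2 * (2 * (10 * |deriv (deriv a) s * deriv (deriv (deriv a)) s| / (deriv a s)^5
          + |deriv (deriv (deriv (deriv a))) s| / (deriv a s)^4
          + 15 * |deriv (deriv a) s|^3 / (deriv a s)^6)))))
    refine hstep.trans ?_
    ring_nf
    ring_nf at hT1nn hT2nn hT3nn
    linarith
end

section
/- Let q ≥ 1 and let f(s) := e^{e^{s^q}} for s > 0. Then lim_{s→∞} 1/B₁[f](s) = 1 and lim_{s→∞} 1/B₂[f](s) = 1; that is, the growth exponent of f is B = 1. -/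
open MeasureTheory Filter
open Set
set_option maxHeartbeats 1000000


/-- `Fint f s = ∫_s^∞ dτ / f(τ)`. -/
noncomputable def Fint (f : ℝ → ℝ) (s : ℝ) : ℝ := ∫ τ in Set.Ioi s, 1 / f τ

/-- `1/B₁[f](s) = (−log F(s))·(1 − f'(s)·F(s))`, with `G` playing the role of `F`. -/
noncomputable def invB1 (f G : ℝ → ℝ) (s : ℝ) : ℝ :=
  (-Real.log (G s)) * (1 - deriv f s * G s)

/-- `1/B₂[f](s) = f'(s)·F(s)·(log F(s))²·(f(s)·f''(s)·F(s)/f'(s) − 1)`,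
with `G` playing the role of `F`. -/
noncomputable def invB2 (f G : ℝ → ℝ) (s : ℝ) : ℝ :=
  deriv f s * G s * (Real.log (G s)) ^ 2 *
    (f s * deriv (deriv f) s * G s / deriv f s - 1)

/-- The model singular solution `v`. -/
noncomputable def modelv (B t : ℝ) : ℝ :=
  if B = 1 then Real.log (-2 * Real.log t) else (-2 * Real.log t) ^ ((B - 1) / B)

/-- The model nonlinearity `g`. -/
noncomputable def modelg (B s : ℝ) : ℝ :=
  if B = 1 then 4 * Real.exp (Real.exp s - 2 * s)
  else (4 / (B * (B / (B - 1)))) * s ^ (1 - 2 * (B / (B - 1))) * Real.exp (s ^ (B / (B - 1)))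

/-- The model function `G(s) = ∫_s^∞ dτ/g(τ)` in closed form. -/
noncomputable def modelG (B s : ℝ) : ℝ :=
  if B = 1 then (1 / 4) * (Real.exp s + 1) * Real.exp (-Real.exp s)
  else (B / 4) * (s ^ (B / (B - 1)) + 1) * Real.exp (-(s ^ (B / (B - 1))))

/-- The Emden–Fowler model profile `ψ`. -/
noncomputable def modelpsi (B ρ : ℝ) : ℝ :=
  if B = 1 then Real.log (ρ - 1) else (ρ - 1) ^ ((B - 1) / B)


noncomputable def uu (q s : ℝ) : ℝ := Real.exp (s ^ q)
noncomputable def ww (q s : ℝ) : ℝ := q * s ^ q * Real.exp (s ^ q) / s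
noncomputable def cc (q s : ℝ) : ℝ := Real.exp (-(s ^ q)) * (1 + (q - 1) / (q * s ^ q))
noncomputable def BB (q s : ℝ) : ℝ :=
  2 + 3 * (q - 1) / (q * s ^ q) + (2 * q - 1) * (q - 1) / (q * s ^ q) ^ 2
noncomputable def hh (q s : ℝ) : ℝ := Real.exp (-(s ^ q)) ^ 2 * BB q s
noncomputable def psi3 (q s : ℝ) : ℝ := Real.exp (-(s ^ q)) ^ 3 *
  ((2 * (1 - q) / q) / s ^ q + (3 * (q - 1) * (1 - 2 * q) / q ^ 2) / (s ^ q) ^ 2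
    + ((2 * q - 1) * (q - 1) * (1 - 3 * q) / q ^ 3) / (s ^ q) ^ 3 - 3 * BB q s)

section basic
variable {q s : ℝ} (hq : 1 ≤ q) (hs : 0 < s)
lemma qpos (hq : 1 ≤ q) : (0:ℝ) < q := lt_of_lt_of_le one_pos hq
lemma ypos (hs : 0 < s) : 0 < s ^ q := Real.rpow_pos_of_pos hs q
lemma ww_pos (hq : 1 ≤ q) (hs : 0 < s) : 0 < ww q s := by unfold ww; positivity
include hq hs in
lemma hasDerivAt_Y : HasDerivAt (fun x : ℝ => x ^ q) (q * s ^ q / s) s := by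
  have h := Real.hasDerivAt_rpow_const (x := s) (p := q) (Or.inr hq)
  convert h using 1
  rw [Real.rpow_sub hs, Real.rpow_one]; ring
include hq hs in
lemma hasDerivAt_uu : HasDerivAt (uu q) (ww q s) s := by
  have := (hasDerivAt_Y hq hs).exp
  refine this.congr_deriv ?_
  unfold ww; ring
include hq hs in
lemma hasDerivAt_ww :
    HasDerivAt (ww q) ((q * (q * s ^ q / s) * Real.exp (s ^ q)
      + q * s ^ q * (Real.exp (s ^ q) * (q * s ^ q / s))) / s
      - q * s ^ q * Real.exp (s ^ q) / s ^ 2) s := by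
  have hY := hasDerivAt_Y hq hs
  have h1 : HasDerivAt (fun x : ℝ => q * x ^ q * Real.exp (x ^ q))
      (q * (q * s ^ q / s) * Real.exp (s ^ q)
        + q * s ^ q * (Real.exp (s ^ q) * (q * s ^ q / s))) s :=
    (hY.const_mul q).mul hY.exp
  have h2 := h1.div (hasDerivAt_id s) hs.ne'
  refine h2.congr_deriv ?_
  simp only [id]; field_simp
include hq hs in
lemma hasDerivAt_inv_ww : HasDerivAt (fun τ => 1 / ww q τ) (-(cc q s)) s := by
  have h := (hasDerivAt_const s (1:ℝ)).div (hasDerivAt_ww hq hs) (ww_pos hq hs).ne'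
  refine h.congr_deriv ?_
  have hqe := (qpos hq).ne'
  have hy := (ypos (q := q) hs).ne'
  have hE := Real.exp_ne_zero (s ^ q)
  simp only [cc, ww, Real.exp_neg]
  field_simp
  ring

include hq hs in
lemma hasDerivAt_cc :
    HasDerivAt (cc q)
      (Real.exp (-(s ^ q)) * (-(q * s ^ q / s)) * (1 + (q - 1) / (q * s ^ q))
        + Real.exp (-(s ^ q)) * (-((q - 1) * (q * (q * s ^ q / s))) / (q * s ^ q) ^ 2)) s := by
  have hY := hasDerivAt_Y hq hs
  have hy : q * s ^ q ≠ 0 := by positivity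
  have h1 : HasDerivAt (fun x : ℝ => 1 + (q - 1) / (q * x ^ q))
      (-((q - 1) * (q * (q * s ^ q / s))) / (q * s ^ q) ^ 2) s := by
    have := ((hasDerivAt_const s (q - 1)).div (hY.const_mul q) hy).const_add 1
    refine this.congr_deriv ?_
    field_simp
    ring
  exact (hY.neg.exp).mul h1
include hq hs in
lemma hasDerivAt_BB :
    HasDerivAt (BB q)
      ((0 * (q * s ^ q) - 3 * (q - 1) * (q * (q * s ^ q / s))) / (q * s ^ q) ^ 2
        + (0 * (q * s ^ q) ^ 2 - (2 * q - 1) * (q - 1)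
            * (2 * (q * s ^ q) ^ 1 * (q * (q * s ^ q / s)))) / ((q * s ^ q) ^ 2) ^ 2) s := by
  have hY := hasDerivAt_Y hq hs
  have hy : q * s ^ q ≠ 0 := by positivity
  have hy2 : (q * s ^ q) ^ 2 ≠ 0 := pow_ne_zero _ hy
  have h2 := (hasDerivAt_const s (3 * (q - 1))).div (hY.const_mul q) hy
  have h3 := (hasDerivAt_const s ((2 * q - 1) * (q - 1))).div ((hY.const_mul q).pow 2) hy2
  have := ((h2.const_add 2).add h3)
  refine this.congr_deriv ?_
  simp only [Pi.pow_apply, Nat.cast_ofNat]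
include hq hs in
lemma hasDerivAt_hh :
    HasDerivAt (hh q)
      (2 * Real.exp (-(s ^ q)) ^ 1 * (Real.exp (-(s ^ q)) * (-(q * s ^ q / s))) * BB q s
        + Real.exp (-(s ^ q)) ^ 2
          * ((0 * (q * s ^ q) - 3 * (q - 1) * (q * (q * s ^ q / s))) / (q * s ^ q) ^ 2
            + (0 * (q * s ^ q) ^ 2 - (2 * q - 1) * (q - 1)
              * (2 * (q * s ^ q) ^ 1 * (q * (q * s ^ q / s)))) / ((q * s ^ q) ^ 2) ^ 2)) s :=
  (((hasDerivAt_Y hq hs).neg.exp).pow 2).mul (hasDerivAt_BB hq hs)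
include hq hs in
lemma hasDerivAt_cc_div_ww :
    HasDerivAt (fun τ => cc q τ / ww q τ) (-(hh q s)) s := by
  have h := (hasDerivAt_cc hq hs).div (hasDerivAt_ww hq hs) (ww_pos hq hs).ne'
  refine h.congr_deriv ?_
  have hqe := (qpos hq).ne'
  have hy := (ypos (q := q) hs).ne'
  have hE := Real.exp_ne_zero (s ^ q)
  simp only [cc, ww, hh, BB, Real.exp_neg]
  field_simp
  ring
include hq hs in
lemma hasDerivAt_hh_div_ww :
    HasDerivAt (fun τ => hh q τ / ww q τ) (psi3 q s) s := by
  have h := (hasDerivAt_hh hq hs).div (hasDerivAt_ww hq hs) (ww_pos hq hs).ne'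
  refine h.congr_deriv ?_
  have hqe := (qpos hq).ne'
  have hy := (ypos (q := q) hs).ne'
  have hE := Real.exp_ne_zero (s ^ q)
  simp only [psi3, ww, hh, BB, Real.exp_neg]
  field_simp
  ring
end basic
open MeasureTheory Filter Set

/-- Integration by parts identity on `Ioi`. -/
lemma ibp_Ioi (u w φ ψ : ℝ → ℝ) (a : ℝ)
    (hu : ∀ x ∈ Set.Ici a, HasDerivAt u (w x) x)
    (hm : ∀ x ∈ Set.Ici a, HasDerivAt (fun τ => φ τ / w τ) (ψ x) x)
    (hw : ∀ x ∈ Set.Ici a, w x ≠ 0)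
    (hiφ : IntegrableOn (fun τ => φ τ * Real.exp (-u τ)) (Set.Ioi a))
    (hiψ : IntegrableOn (fun τ => ψ τ * Real.exp (-u τ)) (Set.Ioi a))
    (h0 : Tendsto (fun τ => φ τ / w τ * Real.exp (-u τ)) atTop (nhds 0)) :
    ∫ τ in Set.Ioi a, φ τ * Real.exp (-u τ)
      = φ a / w a * Real.exp (-u a) + ∫ τ in Set.Ioi a, ψ τ * Real.exp (-u τ) := by
  have key : ∀ x ∈ Set.Ici a, HasDerivAt (fun τ => φ τ / w τ * Real.exp (-u τ))
      (ψ x * Real.exp (-u x) - φ x * Real.exp (-u x)) x := by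
    intro x hx
    have h := (hm x hx).mul ((hu x hx).neg.exp)
    refine h.congr_deriv ?_
    have hwx := hw x hx
    simp only [Pi.neg_apply]
    field_simp
    ring
  have hint : IntegrableOn
      (fun x => ψ x * Real.exp (-u x) - φ x * Real.exp (-u x)) (Set.Ioi a) := hiψ.sub hiφ
  have := integral_Ioi_of_hasDerivAt_of_tendsto' key hint h0
  rw [integral_sub hiψ hiφ] at this
  linarith [this]

/-- Quantitative Laplace-type ratio lemma. -/
lemma laplace_ratio (u w φ ψ : ℝ → ℝ)
    (hu : ∀ᶠ x in atTop, HasDerivAt u (w x) x)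
    (hm : ∀ᶠ x in atTop, HasDerivAt (fun τ => φ τ / w τ) (ψ x) x)
    (hφ : ∀ᶠ x in atTop, 0 < φ x)
    (hw : ∀ᶠ x in atTop, 0 < w x)
    (hiφ : ∀ᶠ a in atTop, IntegrableOn (fun τ => φ τ * Real.exp (-u τ)) (Set.Ioi a))
    (hiψ : ∀ᶠ a in atTop, IntegrableOn (fun τ => ψ τ * Real.exp (-u τ)) (Set.Ioi a))
    (h0 : Tendsto (fun τ => φ τ / w τ * Real.exp (-u τ)) atTop (nhds 0))
    (hr : Tendsto (fun τ => ψ τ / φ τ) atTop (nhds 0)) :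
    Tendsto (fun s => (∫ τ in Set.Ioi s, φ τ * Real.exp (-u τ))
      / (φ s / w s * Real.exp (-u s))) atTop (nhds 1) := by
  rw [Metric.tendsto_atTop]
  intro ε hε
  set ε' : ℝ := min (ε / 3) (1 / 2) with hε'def
  have hε'pos : 0 < ε' := lt_min (by linarith) (by norm_num)
  have hε'le : ε' ≤ 1 / 2 := min_le_right _ _
  have hε'le2 : ε' ≤ ε / 3 := min_le_left _ _
  have hrb : ∀ᶠ x in atTop, |ψ x / φ x| < ε' := by
    have := Metric.tendsto_nhds.mp hr ε' hε'pos
    simpa only [Real.dist_eq, sub_zero] using this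
  obtain ⟨N, hN⟩ := eventually_atTop.mp
    (hu.and (hm.and (hφ.and (hw.and (hiφ.and (hiψ.and hrb))))))
  refine ⟨N, fun s hs => ?_⟩
  obtain ⟨hus, hms, hφs, hws, hiφs, hiψs, -⟩ := hN s hs
  -- pointwise facts on Ici s
  have hIci : ∀ x ∈ Set.Ici s, N ≤ x := fun x hx => le_trans hs hx
  have key := ibp_Ioi u w φ ψ s
    (fun x hx => (hN x (hIci x hx)).1)
    (fun x hx => (hN x (hIci x hx)).2.1)
    (fun x hx => ((hN x (hIci x hx)).2.2.2.1).ne')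
    hiφs hiψs h0
  set R := ∫ τ in Set.Ioi s, φ τ * Real.exp (-u τ) with hR
  set Ψ := φ s / w s * Real.exp (-u s) with hΨ
  have hΨpos : 0 < Ψ := by
    apply mul_pos (div_pos hφs hws) (Real.exp_pos _)
  have hRnonneg : 0 ≤ R := by
    apply setIntegral_nonneg measurableSet_Ioi
    intro x hx
    have := ((hN x (hIci x (Set.mem_Ici.mpr (le_of_lt hx)))).2.2.1)
    positivity
  -- bound on the remainder integral
  have hbound : |∫ τ in Set.Ioi s, ψ τ * Real.exp (-u τ)| ≤ ε' * R := by
    have hb : ∀ᵐ τ ∂(volume.restrict (Set.Ioi s)),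
        ‖ψ τ * Real.exp (-u τ)‖ ≤ ε' * (φ τ * Real.exp (-u τ)) := by
      rw [ae_restrict_iff' measurableSet_Ioi]
      filter_upwards with τ
      intro hτ
      have hτ' := hN τ (hIci τ (Set.mem_Ici.mpr (le_of_lt hτ)))
      have hφτ := hτ'.2.2.1
      have hrτ := hτ'.2.2.2.2.2.2
      have : |ψ τ| ≤ ε' * φ τ := by
        rw [abs_div] at hrτ
        have h2 := (div_le_iff₀ (abs_pos.mpr hφτ.ne')).mp hrτ.le
        rw [abs_of_pos hφτ] at h2
        linarith
      calc ‖ψ τ * Real.exp (-u τ)‖ = |ψ τ| * Real.exp (-u τ) := by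
            rw [norm_mul, Real.norm_eq_abs, Real.norm_eq_abs, abs_of_pos (Real.exp_pos _)]
        _ ≤ ε' * φ τ * Real.exp (-u τ) := by
            exact mul_le_mul_of_nonneg_right this (Real.exp_pos _).le
        _ = ε' * (φ τ * Real.exp (-u τ)) := by ring
    have h1 := norm_integral_le_of_norm_le (hiφs.const_mul ε') hb
    rw [integral_const_mul] at h1
    simpa using h1
  -- conclude
  have h1 : |R - Ψ| ≤ ε' * R := by
    have hd : R - Ψ = ∫ τ in Set.Ioi s, ψ τ * Real.exp (-u τ) := by
      rw [key]; ring
    rw [hd]; exact hbound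
  have hRpos : 0 < R := by
    rcases lt_or_eq_of_le hRnonneg with h | h
    · exact h
    · exfalso
      rw [← h] at h1
      simp only [mul_zero] at h1
      have : Ψ ≤ 0 := by
        have := abs_le.mp h1
        linarith [this.1]
      linarith
  have hlow : (1 - ε') * R ≤ Ψ := by
    have := (abs_le.mp h1).2
    nlinarith
  have hhigh : Ψ ≤ (1 + ε') * R := by
    have := (abs_le.mp h1).1
    nlinarith
  have hT1 : R / Ψ ≤ 1 / (1 - ε') := by
    rw [div_le_div_iff₀ hΨpos (by linarith)]
    nlinarith
  have hT2 : 1 / (1 + ε') ≤ R / Ψ := by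
    rw [div_le_div_iff₀ (by linarith) hΨpos]
    nlinarith
  rw [Real.dist_eq]
  have e1 : 1 / (1 - ε') - 1 ≤ 2 * ε' := by
    rw [div_sub_one (by linarith : (1:ℝ) - ε' ≠ 0)]
    rw [div_le_iff₀ (by linarith)]
    nlinarith
  have e2 : 1 - 1 / (1 + ε') ≤ 2 * ε' := by
    have h3 : (0:ℝ) < 1 + ε' := by linarith
    have h4 : 1 - ε' ≤ 1 / (1 + ε') := by
      rw [le_div_iff₀ h3]; nlinarith
    linarith
  have : |R / Ψ - 1| ≤ 2 * ε' := by
    rw [abs_le]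
    constructor <;> nlinarith
  calc |R / Ψ - 1| ≤ 2 * ε' := this
    _ ≤ 2 * (ε / 3) := by linarith
    _ < ε := by linarith

section limits
variable {q : ℝ} (hq : 1 ≤ q)

include hq in
lemma self_le_Y : ∀ᶠ s : ℝ in atTop, s ≤ s ^ q := by
  filter_upwards [eventually_ge_atTop 1] with s hs
  nth_rewrite 1 [← Real.rpow_one s]
  exact Real.rpow_le_rpow_of_exponent_le hs hq

include hq in
lemma tY : Tendsto (fun s : ℝ => s ^ q) atTop atTop :=
  tendsto_atTop_mono' atTop (self_le_Y hq) tendsto_id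

include hq in
lemma tendsto_exp_negY : Tendsto (fun s : ℝ => Real.exp (-(s ^ q))) atTop (nhds 0) :=
  Real.tendsto_exp_neg_atTop_nhds_zero.comp (tY hq)

include hq in
lemma tendsto_invY : Tendsto (fun s : ℝ => (s ^ q)⁻¹) atTop (nhds 0) :=
  (tY hq).inv_tendsto_atTop

include hq in
lemma one_le_Y : ∀ᶠ s : ℝ in atTop, 1 ≤ s ^ q := by
  filter_upwards [self_le_Y hq, eventually_ge_atTop 1] with s h1 h2
  linarith

include hq in
lemma tendsto_cc_zero : Tendsto (cc q) atTop (nhds 0) := by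
  have base : Tendsto (fun s : ℝ => Real.exp (-(s ^ q)) * (1 + (q - 1) / q * (s ^ q)⁻¹))
      atTop (nhds (0 * (1 + (q - 1) / q * 0))) :=
    (tendsto_exp_negY hq).mul (tendsto_const_nhds.add (tendsto_const_nhds.mul (tendsto_invY hq)))
  have : Tendsto (fun s : ℝ => Real.exp (-(s ^ q)) * (1 + (q - 1) / q * (s ^ q)⁻¹))
      atTop (nhds 0) := by simpa using base
  apply this.congr'
  filter_upwards [one_le_Y hq] with s hy
  have hy0 : s ^ q ≠ 0 := by positivity
  have hq0 : q ≠ 0 := (qpos hq).ne'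
  unfold cc
  field_simp

include hq in
lemma tendsto_BB_two : Tendsto (BB q) atTop (nhds 2) := by
  have base : Tendsto (fun s : ℝ => 2 + 3 * (q - 1) / q * (s ^ q)⁻¹
      + (2 * q - 1) * (q - 1) / q ^ 2 * ((s ^ q)⁻¹) ^ 2) atTop
      (nhds (2 + 3 * (q - 1) / q * 0 + (2 * q - 1) * (q - 1) / q ^ 2 * 0 ^ 2)) :=
    (tendsto_const_nhds.add (tendsto_const_nhds.mul (tendsto_invY hq))).add
      (tendsto_const_nhds.mul ((tendsto_invY hq).pow 2))
  have : Tendsto (fun s : ℝ => 2 + 3 * (q - 1) / q * (s ^ q)⁻¹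
      + (2 * q - 1) * (q - 1) / q ^ 2 * ((s ^ q)⁻¹) ^ 2) atTop (nhds 2) := by
    simpa using base
  apply this.congr'
  filter_upwards [one_le_Y hq] with s hy
  have hy0 : s ^ q ≠ 0 := by positivity
  have hq0 : q ≠ 0 := (qpos hq).ne'
  unfold BB
  field_simp

include hq in
lemma BB_ge_two : ∀ᶠ s : ℝ in atTop, 2 ≤ BB q s := by
  filter_upwards [one_le_Y hq, eventually_ge_atTop 1] with s hy hs
  have hy0 : 0 < s ^ q := by positivity
  have hqq : (0:ℝ) < q := qpos hq
  have h1 : 0 ≤ 3 * (q - 1) / (q * s ^ q) := div_nonneg (by linarith) (by positivity)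
  have h2 : 0 ≤ (2 * q - 1) * (q - 1) / (q * s ^ q) ^ 2 :=
    div_nonneg (mul_nonneg (by linarith) (by linarith)) (by positivity)
  unfold BB
  linarith

end limits

section limits2
variable {q : ℝ} (hq : 1 ≤ q)

include hq in
lemma cc_pos : ∀ᶠ s : ℝ in atTop, 0 < cc q s := by
  filter_upwards [one_le_Y hq] with s hy
  have hqq : (0:ℝ) < q := qpos hq
  have hy0 : 0 < s ^ q := by linarith
  have h1 : 0 ≤ (q - 1) / (q * s ^ q) := div_nonneg (by linarith) (by positivity)
  unfold cc
  have : (0:ℝ) < 1 + (q - 1) / (q * s ^ q) := by linarith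
  positivity

include hq in
lemma hh_pos : ∀ᶠ s : ℝ in atTop, 0 < hh q s := by
  filter_upwards [BB_ge_two hq] with s hB
  unfold hh
  have : (0:ℝ) < BB q s := by linarith
  positivity

include hq in
lemma tendsto_hh_div_cc : Tendsto (fun s => -(hh q s) / cc q s) atTop (nhds 0) := by
  have base : Tendsto (fun s : ℝ => -(Real.exp (-(s ^ q)) * BB q s
      / (1 + (q - 1) / (q * s ^ q)))) atTop (nhds (-(0 * 2 / (1 + 0)))) := by
    apply Tendsto.neg
    apply Tendsto.div (((tendsto_exp_negY hq)).mul (tendsto_BB_two hq))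
    · apply tendsto_const_nhds.add
      have : Tendsto (fun s : ℝ => (q - 1) / q * (s ^ q)⁻¹) atTop (nhds ((q-1)/q * 0)) :=
        tendsto_const_nhds.mul (tendsto_invY hq)
      apply (by simpa using this : Tendsto _ atTop (nhds (0:ℝ))).congr'
      filter_upwards [one_le_Y hq] with s hy
      have hy0 : s ^ q ≠ 0 := by positivity
      have hq0 : q ≠ 0 := (qpos hq).ne'
      field_simp
    · norm_num
  have base' : Tendsto (fun s : ℝ => -(Real.exp (-(s ^ q)) * BB q s
      / (1 + (q - 1) / (q * s ^ q)))) atTop (nhds 0) := by simpa using base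
  apply base'.congr'
  filter_upwards [one_le_Y hq] with s hy
  have hqq : (0:ℝ) < q := qpos hq
  have hy0 : 0 < s ^ q := by linarith
  have h1 : 0 ≤ (q - 1) / (q * s ^ q) := div_nonneg (by linarith) (by positivity)
  have hden : (0:ℝ) < 1 + (q - 1) / (q * s ^ q) := by linarith
  have hE : Real.exp (-(s ^ q)) ≠ 0 := Real.exp_ne_zero _
  unfold hh cc
  rw [neg_div, pow_two, mul_assoc, mul_div_mul_left _ _ hE]

include hq in
lemma tendsto_psi3_div_hh : Tendsto (fun s => psi3 q s / hh q s) atTop (nhds 0) := by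
  have tbr : Tendsto (fun s : ℝ => (2 * (1 - q) / q) * (s ^ q)⁻¹
      + (3 * (q - 1) * (1 - 2 * q) / q ^ 2) * ((s ^ q)⁻¹) ^ 2
      + ((2 * q - 1) * (q - 1) * (1 - 3 * q) / q ^ 3) * ((s ^ q)⁻¹) ^ 3
      - 3 * BB q s) atTop (nhds (2 * (1 - q) / q * 0 + 3 * (q - 1) * (1 - 2 * q) / q ^ 2 * 0 ^ 2
        + (2 * q - 1) * (q - 1) * (1 - 3 * q) / q ^ 3 * 0 ^ 3 - 3 * 2)) := by
    exact (((tendsto_const_nhds.mul (tendsto_invY hq)).add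
      (tendsto_const_nhds.mul ((tendsto_invY hq).pow 2))).add
      (tendsto_const_nhds.mul ((tendsto_invY hq).pow 3))).sub
      (tendsto_const_nhds.mul (tendsto_BB_two hq))
  have base : Tendsto (fun s : ℝ => Real.exp (-(s ^ q)) * ((2 * (1 - q) / q) * (s ^ q)⁻¹
      + (3 * (q - 1) * (1 - 2 * q) / q ^ 2) * ((s ^ q)⁻¹) ^ 2
      + ((2 * q - 1) * (q - 1) * (1 - 3 * q) / q ^ 3) * ((s ^ q)⁻¹) ^ 3
      - 3 * BB q s) / BB q s) atTop (nhds (0 * (2 * (1 - q) / q * 0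
        + 3 * (q - 1) * (1 - 2 * q) / q ^ 2 * 0 ^ 2
        + (2 * q - 1) * (q - 1) * (1 - 3 * q) / q ^ 3 * 0 ^ 3 - 3 * 2) / 2)) :=
    Tendsto.div ((tendsto_exp_negY hq).mul tbr) (tendsto_BB_two hq) two_ne_zero
  have base' : Tendsto (fun s : ℝ => Real.exp (-(s ^ q)) * ((2 * (1 - q) / q) * (s ^ q)⁻¹
      + (3 * (q - 1) * (1 - 2 * q) / q ^ 2) * ((s ^ q)⁻¹) ^ 2
      + ((2 * q - 1) * (q - 1) * (1 - 3 * q) / q ^ 3) * ((s ^ q)⁻¹) ^ 3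
      - 3 * BB q s) / BB q s) atTop (nhds 0) := by simpa using base
  apply base'.congr'
  filter_upwards [one_le_Y hq, BB_ge_two hq] with s hy hB
  have hqq : (0:ℝ) < q := qpos hq
  have hy0 : 0 < s ^ q := by linarith
  have hB0 : BB q s ≠ 0 := by linarith
  have hE : Real.exp (-(s ^ q)) ≠ 0 := Real.exp_ne_zero _
  unfold psi3 hh
  rw [pow_succ, pow_two]
  rw [div_eq_div_iff (by positivity) (by positivity)]
  field_simp

end limits2

section limits3
variable {q : ℝ} (hq : 1 ≤ q)

include hq in
lemma tendsto_uu_cc : Tendsto (fun s => uu q s * cc q s) atTop (nhds 1) := by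
  have base : Tendsto (fun s : ℝ => 1 + (q - 1) / q * (s ^ q)⁻¹) atTop
      (nhds (1 + (q - 1) / q * 0)) := tendsto_const_nhds.add (tendsto_const_nhds.mul (tendsto_invY hq))
  have base' : Tendsto (fun s : ℝ => 1 + (q - 1) / q * (s ^ q)⁻¹) atTop (nhds 1) := by
    simpa using base
  apply base'.congr'
  filter_upwards [one_le_Y hq] with s hy
  have hqq : (0:ℝ) < q := qpos hq
  have hy0 : 0 < s ^ q := by linarith
  unfold uu cc
  rw [Real.exp_neg, ← mul_assoc, mul_inv_cancel₀ (Real.exp_ne_zero _), one_mul]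
  field_simp

include hq in
lemma tendsto_uu_sq_hh : Tendsto (fun s => uu q s ^ 2 * hh q s) atTop (nhds 2) := by
  apply (tendsto_BB_two hq).congr'
  filter_upwards with s
  unfold uu hh
  rw [Real.exp_neg, inv_pow]
  rw [← mul_assoc, mul_inv_cancel₀ (pow_ne_zero _ (Real.exp_ne_zero _)), one_mul]

include hq in
lemma tendsto_div_ww_exp {φ : ℝ → ℝ} {C : ℝ} (hb : ∀ᶠ s in atTop, |φ s| ≤ C) :
    Tendsto (fun s => φ s / ww q s * Real.exp (-uu q s)) atTop (nhds 0) := by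
  have hqq : (0:ℝ) < q := qpos hq
  have hbnd : ∀ᶠ s : ℝ in atTop, |φ s / ww q s * Real.exp (-uu q s)|
      ≤ C / q * Real.exp (-(s ^ q)) := by
    filter_upwards [hb, one_le_Y hq, self_le_Y hq, eventually_ge_atTop 1] with s hbs hy hsy hs1
    have hs0 : (0:ℝ) < s := by linarith
    have hwp : 0 < ww q s := ww_pos hq hs0
    have hC : 0 ≤ C := le_trans (abs_nonneg _) hbs
    have hey : 1 ≤ Real.exp (s ^ q) := by
      rw [Real.one_le_exp_iff]
      linarith
    have hww : q ≤ ww q s := by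
      unfold ww
      rw [le_div_iff₀ hs0]
      calc q * s ≤ q * s ^ q := by nlinarith
        _ ≤ q * s ^ q * Real.exp (s ^ q) := by nlinarith [mul_pos hqq (lt_of_lt_of_le one_pos hy)]
    have hue : Real.exp (-uu q s) ≤ Real.exp (-(s ^ q)) := by
      apply Real.exp_le_exp.mpr
      unfold uu
      have := Real.add_one_le_exp (s ^ q)
      linarith
    have key : |φ s / ww q s * Real.exp (-uu q s)| ≤ C * (Real.exp (-(s ^ q)) / q) := by
      rw [abs_mul, abs_div, abs_of_pos hwp, abs_of_pos (Real.exp_pos _), div_mul_eq_mul_div,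
        div_le_iff₀ hwp]
      have h4 : Real.exp (-uu q s) * q ≤ Real.exp (-(s ^ q)) * ww q s := by
        apply mul_le_mul hue hww hqq.le (Real.exp_pos _).le
      calc |φ s| * Real.exp (-uu q s) ≤ C * Real.exp (-uu q s) :=
            mul_le_mul_of_nonneg_right hbs (Real.exp_pos _).le
        _ ≤ C * (Real.exp (-(s ^ q)) / q * ww q s) := by
            apply mul_le_mul_of_nonneg_left _ hC
            rw [div_mul_eq_mul_div, le_div_iff₀ hqq]
            linarith [h4]
        _ = C * (Real.exp (-(s ^ q)) / q) * ww q s := by ring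
    calc |φ s / ww q s * Real.exp (-uu q s)| ≤ C * (Real.exp (-(s ^ q)) / q) := key
      _ = C / q * Real.exp (-(s ^ q)) := by ring
  have hup : Tendsto (fun s : ℝ => C / q * Real.exp (-(s ^ q))) atTop (nhds 0) := by
    simpa using (tendsto_exp_negY hq).const_mul (C / q)
  have hlo : Tendsto (fun s : ℝ => -(C / q * Real.exp (-(s ^ q)))) atTop (nhds 0) := by
    simpa using hup.neg
  apply tendsto_of_tendsto_of_tendsto_of_le_of_le' hlo hup
  · filter_upwards [hbnd] with s h
    linarith [(abs_le.mp h).1]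
  · filter_upwards [hbnd] with s h
    exact (abs_le.mp h).2

end limits3

section integ
variable {q : ℝ} (hq : 1 ≤ q)

lemma bdd_of_tendsto {g : ℝ → ℝ} {L : ℝ} (hL : Tendsto g atTop (nhds L)) :
    ∃ C, ∀ᶠ s in atTop, |g s| ≤ C := by
  refine ⟨|L| + 1, ?_⟩
  filter_upwards [Metric.tendsto_nhds.mp hL 1 one_pos] with s hs
  rw [Real.dist_eq] at hs
  calc |g s| = |g s - L + L| := by ring_nf
    _ ≤ |g s - L| + |L| := abs_add_le _ _
    _ ≤ |L| + 1 := by linarith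

include hq in
lemma continuousAt_uu {x : ℝ} (hx : 0 < x) : ContinuousAt (uu q) x :=
  (hasDerivAt_uu hq hx).continuousAt

include hq in
lemma integrableOn_mul_exp {g : ℝ → ℝ} {C a : ℝ} (ha : 1 ≤ a)
    (hg : ∀ x ∈ Set.Ici a, ContinuousAt g x) (hbd : ∀ x ∈ Set.Ici a, |g x| ≤ C) :
    IntegrableOn (fun τ => g τ * Real.exp (-uu q τ)) (Set.Ioi a) := by
  have hbase : IntegrableOn (fun x : ℝ => C * Real.exp (-1 * x)) (Set.Ioi a) :=
    (exp_neg_integrableOn_Ioi a one_pos).const_mul C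
  apply Integrable.mono' hbase
  · have hc : ContinuousOn (fun τ => g τ * Real.exp (-uu q τ)) (Set.Ioi a) := by
      intro x hx
      have hx0 : 0 < x := lt_of_lt_of_le one_pos (le_trans ha (le_of_lt hx))
      exact ((hg x (Set.mem_Ici.mpr (le_of_lt hx))).mul
        ((Real.continuous_exp.continuousAt).comp ((continuousAt_uu hq hx0).neg))).continuousWithinAt
    exact hc.aestronglyMeasurable measurableSet_Ioi
  · rw [ae_restrict_iff' measurableSet_Ioi]
    filter_upwards with τ hτ
    have hτ1 : 1 ≤ τ := le_trans ha (le_of_lt hτ)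
    have hty : τ ≤ τ ^ q := by
      nth_rewrite 1 [← Real.rpow_one τ]
      exact Real.rpow_le_rpow_of_exponent_le hτ1 hq
    have huτ : τ ≤ uu q τ := by
      unfold uu
      have := Real.add_one_le_exp (τ ^ q)
      linarith
    have hC : 0 ≤ C := le_trans (abs_nonneg _) (hbd τ (Set.mem_Ici.mpr (le_of_lt hτ)))
    calc ‖g τ * Real.exp (-uu q τ)‖ = |g τ| * Real.exp (-uu q τ) := by
          rw [norm_mul, Real.norm_eq_abs, Real.norm_eq_abs, abs_of_pos (Real.exp_pos _)]
      _ ≤ C * Real.exp (-uu q τ) :=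
          mul_le_mul_of_nonneg_right (hbd τ (Set.mem_Ici.mpr (le_of_lt hτ))) (Real.exp_pos _).le
      _ ≤ C * Real.exp (-1 * τ) := by
          apply mul_le_mul_of_nonneg_left _ hC
          apply Real.exp_le_exp.mpr
          linarith

include hq in
lemma eventually_integrableOn {g : ℝ → ℝ} {C : ℝ} (hb : ∀ᶠ s in atTop, |g s| ≤ C)
    (hcont : ∀ x : ℝ, 1 ≤ x → ContinuousAt g x) :
    ∀ᶠ a in atTop, IntegrableOn (fun τ => g τ * Real.exp (-uu q τ)) (Set.Ioi a) := by
  obtain ⟨N, hN⟩ := eventually_atTop.mp hb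
  filter_upwards [eventually_ge_atTop 1, eventually_ge_atTop N] with a h1 h2
  exact integrableOn_mul_exp hq h1 (fun x hx => hcont x (le_trans h1 hx))
    (fun x hx => hN x (le_trans h2 hx))

include hq in
lemma continuousAt_cc {x : ℝ} (hx : 0 < x) : ContinuousAt (cc q) x :=
  (hasDerivAt_cc hq hx).continuousAt

include hq in
lemma continuousAt_hh {x : ℝ} (hx : 0 < x) : ContinuousAt (hh q) x :=
  (hasDerivAt_hh hq hx).continuousAt

include hq in
lemma continuousAt_psi3 {x : ℝ} (hx : 0 < x) : ContinuousAt (psi3 q) x := by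
  have hY : ContinuousAt (fun s : ℝ => s ^ q) x := (hasDerivAt_Y hq hx).continuousAt
  have hy0 : x ^ q ≠ 0 := (ypos hx).ne'
  have hBB : ContinuousAt (BB q) x := (hasDerivAt_BB hq hx).continuousAt
  have hE : ContinuousAt (fun s : ℝ => Real.exp (-(s ^ q)) ^ 3) x :=
    ((Real.continuous_exp.continuousAt).comp hY.neg).pow 3
  exact hE.mul ((((continuousAt_const.div hY hy0).add
    (continuousAt_const.div (hY.pow 2) (pow_ne_zero _ hy0))).add
    (continuousAt_const.div (hY.pow 3) (pow_ne_zero _ hy0))).sub (continuousAt_const.mul hBB))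

include hq in
lemma tendsto_psi3_zero : Tendsto (psi3 q) atTop (nhds 0) := by
  have tbr : Tendsto (fun s : ℝ => (2 * (1 - q) / q) * (s ^ q)⁻¹
      + (3 * (q - 1) * (1 - 2 * q) / q ^ 2) * ((s ^ q)⁻¹) ^ 2
      + ((2 * q - 1) * (q - 1) * (1 - 3 * q) / q ^ 3) * ((s ^ q)⁻¹) ^ 3
      - 3 * BB q s) atTop (nhds (2 * (1 - q) / q * 0 + 3 * (q - 1) * (1 - 2 * q) / q ^ 2 * 0 ^ 2
        + (2 * q - 1) * (q - 1) * (1 - 3 * q) / q ^ 3 * 0 ^ 3 - 3 * 2)) :=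
    (((tendsto_const_nhds.mul (tendsto_invY hq)).add
      (tendsto_const_nhds.mul (((tendsto_invY hq)).pow 2))).add
      (tendsto_const_nhds.mul (((tendsto_invY hq)).pow 3))).sub
      (tendsto_const_nhds.mul (tendsto_BB_two hq))
  have base := ((tendsto_exp_negY hq).pow 3).mul tbr
  have base' : Tendsto (fun s : ℝ => Real.exp (-(s ^ q)) ^ 3 * ((2 * (1 - q) / q) * (s ^ q)⁻¹
      + (3 * (q - 1) * (1 - 2 * q) / q ^ 2) * ((s ^ q)⁻¹) ^ 2
      + ((2 * q - 1) * (q - 1) * (1 - 3 * q) / q ^ 3) * ((s ^ q)⁻¹) ^ 3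
      - 3 * BB q s)) atTop (nhds 0) := by simpa using base
  apply base'.congr'
  filter_upwards with s
  unfold psi3
  simp only [div_eq_mul_inv, inv_pow]
end integ

section apply
variable {q : ℝ} (hq : 1 ≤ q)

include hq in
lemma tendsto_hh_zero : Tendsto (hh q) atTop (nhds 0) := by
  have := ((tendsto_exp_negY hq).pow 2).mul (tendsto_BB_two hq)
  unfold hh
  simpa using this

include hq in
lemma ev_hasDerivAt_uu : ∀ᶠ x : ℝ in atTop, HasDerivAt (uu q) (ww q x) x := by
  filter_upwards [eventually_gt_atTop 0] with x hx
  exact hasDerivAt_uu hq hx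

include hq in
lemma ev_ww_pos : ∀ᶠ x : ℝ in atTop, 0 < ww q x := by
  filter_upwards [eventually_gt_atTop 0] with x hx
  exact ww_pos hq hx

include hq in
lemma TA : Tendsto (fun s => (∫ τ in Set.Ioi s, cc q τ * Real.exp (-uu q τ))
    / (cc q s / ww q s * Real.exp (-uu q s))) atTop (nhds 1) := by
  obtain ⟨C, hC⟩ := bdd_of_tendsto (tendsto_cc_zero hq)
  obtain ⟨C2, hC2⟩ := bdd_of_tendsto ((tendsto_hh_zero hq).neg)
  apply laplace_ratio (uu q) (ww q) (cc q) (fun x => -(hh q x)) (ev_hasDerivAt_uu hq)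
  · filter_upwards [eventually_gt_atTop 0] with x hx
    exact hasDerivAt_cc_div_ww hq hx
  · exact cc_pos hq
  · exact ev_ww_pos hq
  · exact eventually_integrableOn hq hC (fun x hx => continuousAt_cc hq (by linarith))
  · exact eventually_integrableOn hq hC2
      (fun x hx => (continuousAt_hh hq (by linarith)).neg)
  · exact tendsto_div_ww_exp hq hC
  · exact tendsto_hh_div_cc hq

include hq in
lemma TB : Tendsto (fun s => (∫ τ in Set.Ioi s, hh q τ * Real.exp (-uu q τ))
    / (hh q s / ww q s * Real.exp (-uu q s))) atTop (nhds 1) := by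
  obtain ⟨C, hC⟩ := bdd_of_tendsto (tendsto_hh_zero hq)
  obtain ⟨C2, hC2⟩ := bdd_of_tendsto (tendsto_psi3_zero hq)
  apply laplace_ratio (uu q) (ww q) (hh q) (psi3 q) (ev_hasDerivAt_uu hq)
  · filter_upwards [eventually_gt_atTop 0] with x hx
    exact hasDerivAt_hh_div_ww hq hx
  · filter_upwards [hh_pos hq] with x hx
    exact hx
  · exact ev_ww_pos hq
  · exact eventually_integrableOn hq hC (fun x hx => continuousAt_hh hq (by linarith))
  · exact eventually_integrableOn hq hC2 (fun x hx => continuousAt_psi3 hq (by linarith))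
  · exact tendsto_div_ww_exp hq hC
  · exact tendsto_psi3_div_hh hq

include hq in
lemma ibp1 : ∀ᶠ a in atTop, (∫ τ in Set.Ioi a, Real.exp (-uu q τ))
    = 1 / ww q a * Real.exp (-uu q a) - ∫ τ in Set.Ioi a, cc q τ * Real.exp (-uu q τ) := by
  obtain ⟨C, hC⟩ := bdd_of_tendsto (tendsto_cc_zero hq)
  have hint1 := eventually_integrableOn hq (g := fun _ => (1:ℝ)) (C := 1)
    (Filter.Eventually.of_forall (fun s => by norm_num)) (fun x _ => continuousAt_const)
  have hint2 := eventually_integrableOn hq (g := fun x => -(cc q x))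
    (by filter_upwards [hC] with s h; simpa using h)
    (fun x hx => (continuousAt_cc hq (by linarith)).neg)
  obtain ⟨N1, hN1⟩ := eventually_atTop.mp
    ((ev_hasDerivAt_uu hq).and ((ev_ww_pos hq).and (eventually_gt_atTop 0)))
  filter_upwards [hint1, hint2, eventually_ge_atTop N1] with a h1 h2 hN
  have key := ibp_Ioi (uu q) (ww q) (fun _ => (1:ℝ)) (fun x => -(cc q x)) a
    (fun x hx => (hN1 x (le_trans hN hx)).1)
    (fun x hx => by
      have := hasDerivAt_inv_ww hq (hN1 x (le_trans hN hx)).2.2 (q := q)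
      simpa [one_div] using this)
    (fun x hx => ((hN1 x (le_trans hN hx)).2.1).ne')
    h1 h2 (by
      have := tendsto_div_ww_exp hq (φ := fun _ => (1:ℝ)) (C := 1)
        (Filter.Eventually.of_forall (fun s => by norm_num))
      simpa using this)
  simp only [one_mul, neg_mul] at key
  rw [integral_neg] at key
  linarith [key]

include hq in
lemma ibp2 : ∀ᶠ a in atTop, (∫ τ in Set.Ioi a, cc q τ * Real.exp (-uu q τ))
    = cc q a / ww q a * Real.exp (-uu q a)
      - ∫ τ in Set.Ioi a, hh q τ * Real.exp (-uu q τ) := by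
  obtain ⟨C, hC⟩ := bdd_of_tendsto (tendsto_cc_zero hq)
  obtain ⟨C2, hC2⟩ := bdd_of_tendsto ((tendsto_hh_zero hq).neg)
  have hint1 := eventually_integrableOn hq hC (fun x hx => continuousAt_cc hq (by linarith))
  have hint2 := eventually_integrableOn hq hC2
    (fun x hx => (continuousAt_hh hq (by linarith)).neg)
  obtain ⟨N1, hN1⟩ := eventually_atTop.mp
    ((ev_hasDerivAt_uu hq).and ((ev_ww_pos hq).and (eventually_gt_atTop 0)))
  filter_upwards [hint1, hint2, eventually_ge_atTop N1] with a h1 h2 hN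
  have key := ibp_Ioi (uu q) (ww q) (cc q) (fun x => -(hh q x)) a
    (fun x hx => (hN1 x (le_trans hN hx)).1)
    (fun x hx => hasDerivAt_cc_div_ww hq (hN1 x (le_trans hN hx)).2.2)
    (fun x hx => ((hN1 x (le_trans hN hx)).2.1).ne')
    h1 h2 (tendsto_div_ww_exp hq hC)
  simp only [neg_mul] at key
  rw [integral_neg] at key
  linarith [key]

end apply

section final
variable {q : ℝ} (hq : 1 ≤ q)

include hq in
lemma tUU : Tendsto (uu q) atTop atTop := Real.tendsto_exp_atTop.comp (tY hq)

include hq in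
lemma lemA : Tendsto (fun s => uu q s
    * (1 - ww q s * Real.exp (uu q s) * ∫ τ in Set.Ioi s, Real.exp (-uu q τ)))
    atTop (nhds 1) := by
  have base : Tendsto (fun s => (uu q s * cc q s)
      * ((∫ τ in Set.Ioi s, cc q τ * Real.exp (-uu q τ))
        / (cc q s / ww q s * Real.exp (-uu q s)))) atTop (nhds (1 * 1)) :=
    (tendsto_uu_cc hq).mul (TA hq)
  have base' := by simpa using base
  apply Tendsto.congr' _ base'
  filter_upwards [ibp1 hq, cc_pos hq, ev_ww_pos hq] with s hibp hcc hww
  rw [hibp]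
  have hE := Real.exp_ne_zero (uu q s)
  rw [Real.exp_neg]
  field_simp
  ring

include hq in
lemma lemB : Tendsto (fun s => ww q s * Real.exp (uu q s)
    * ∫ τ in Set.Ioi s, Real.exp (-uu q τ)) atTop (nhds 1) := by
  have h2 : Tendsto (fun s => (uu q s)⁻¹) atTop (nhds 0) :=
    (tUU hq).inv_tendsto_atTop
  have base : Tendsto (fun s => 1 - (uu q s)⁻¹ * (uu q s
      * (1 - ww q s * Real.exp (uu q s) * ∫ τ in Set.Ioi s, Real.exp (-uu q τ))))
      atTop (nhds (1 - 0 * 1)) := tendsto_const_nhds.sub (h2.mul (lemA hq))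
  have base' := by simpa using base
  apply Tendsto.congr' _ base'
  filter_upwards with s
  have hu : uu q s ≠ 0 := (Real.exp_pos _).ne'
  field_simp
  ring

include hq in
lemma lemC : Tendsto (fun s => uu q s ^ 2 * ((1 + cc q s)
    * (ww q s * Real.exp (uu q s) * ∫ τ in Set.Ioi s, Real.exp (-uu q τ)) - 1))
    atTop (nhds 1) := by
  have base : Tendsto (fun s => (1 + cc q s) * ((uu q s ^ 2 * hh q s)
      * ((∫ τ in Set.Ioi s, hh q τ * Real.exp (-uu q τ))
        / (hh q s / ww q s * Real.exp (-uu q s))))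
      - (uu q s * cc q s) ^ 2) atTop (nhds ((1 + 0) * (2 * 1) - 1 ^ 2)) :=
    ((tendsto_const_nhds.add (tendsto_cc_zero hq)).mul
      ((tendsto_uu_sq_hh hq).mul (TB hq))).sub ((tendsto_uu_cc hq).pow 2)
  have base' : Tendsto (fun s => (1 + cc q s) * ((uu q s ^ 2 * hh q s)
      * ((∫ τ in Set.Ioi s, hh q τ * Real.exp (-uu q τ))
        / (hh q s / ww q s * Real.exp (-uu q s))))
      - (uu q s * cc q s) ^ 2) atTop (nhds 1) := by
    convert base using 2
    norm_num
  apply Tendsto.congr' _ base'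
  filter_upwards [ibp1 hq, ibp2 hq, hh_pos hq, ev_ww_pos hq] with s hibp1 hibp2 hhh hww
  rw [hibp1, hibp2]
  have hE := Real.exp_ne_zero (uu q s)
  rw [Real.exp_neg]
  field_simp
  ring

include hq in
lemma lemD : Tendsto (fun s => -Real.log (∫ τ in Set.Ioi s, Real.exp (-uu q τ)) / uu q s)
    atTop (nhds 1) := by
  have hEgt : ∀ᶠ s in atTop, (1:ℝ)/2 < ww q s * Real.exp (uu q s)
      * ∫ τ in Set.Ioi s, Real.exp (-uu q τ) :=
    (lemB hq).eventually (eventually_gt_nhds (show (1:ℝ)/2 < 1 by norm_num))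
  -- logww / uu → 0
  have hlog_ww : Tendsto (fun s => Real.log (ww q s) * (uu q s)⁻¹) atTop (nhds 0) := by
    have hup : Tendsto (fun s : ℝ => (2 * s ^ q + Real.log q) * Real.exp (-(s ^ q)))
        atTop (nhds 0) := by
      have hbase : Tendsto (fun t : ℝ => 2 * (t ^ (1:ℕ) * Real.exp (-t))
          + Real.log q * Real.exp (-t)) atTop (nhds (2 * 0 + Real.log q * 0)) :=
        ((Real.tendsto_pow_mul_exp_neg_atTop_nhds_zero 1).const_mul 2).add
          (Real.tendsto_exp_neg_atTop_nhds_zero.const_mul (Real.log q))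
      have hbase' : Tendsto (fun t : ℝ => 2 * (t ^ (1:ℕ) * Real.exp (-t))
          + Real.log q * Real.exp (-t)) atTop (nhds 0) := by simpa using hbase
      have := hbase'.comp (tY hq)
      apply this.congr
      intro s
      simp only [Function.comp_apply]
      ring
    apply tendsto_of_tendsto_of_tendsto_of_le_of_le' tendsto_const_nhds hup
    · filter_upwards [one_le_Y hq, self_le_Y hq, eventually_ge_atTop 1] with s hy hsy hs1
      have hs0 : (0:ℝ) < s := by linarith
      have hy0 : (0:ℝ) < s ^ q := by linarith
      have hq0 : (0:ℝ) < q := qpos hq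
      have hlww : Real.log (ww q s) = Real.log q + Real.log (s ^ q) + s ^ q - Real.log s := by
        unfold ww
        rw [Real.log_div (by positivity) hs0.ne', Real.log_mul (by positivity)
          (Real.exp_ne_zero _), Real.log_mul hq0.ne' hy0.ne', Real.log_exp]
      have h1 : Real.log s ≤ Real.log (s ^ q) := Real.log_le_log hs0 hsy
      have h2 : 0 ≤ Real.log q := Real.log_nonneg hq
      have h3 : 0 ≤ Real.log (ww q s) := by
        rw [hlww]; linarith
      have h4 : (0:ℝ) ≤ (uu q s)⁻¹ := inv_nonneg.mpr (le_of_lt (Real.exp_pos _))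
      exact mul_nonneg h3 h4
    · filter_upwards [one_le_Y hq, self_le_Y hq, eventually_ge_atTop 1] with s hy hsy hs1
      have hs0 : (0:ℝ) < s := by linarith
      have hy0 : (0:ℝ) < s ^ q := by linarith
      have hq0 : (0:ℝ) < q := qpos hq
      have hlww : Real.log (ww q s) = Real.log q + Real.log (s ^ q) + s ^ q - Real.log s := by
        unfold ww
        rw [Real.log_div (by positivity) hs0.ne', Real.log_mul (by positivity)
          (Real.exp_ne_zero _), Real.log_mul hq0.ne' hy0.ne', Real.log_exp]
      have h1 : Real.log (s ^ q) ≤ s ^ q - 1 := Real.log_le_sub_one_of_pos hy0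
      have h2 : 0 ≤ Real.log s := Real.log_nonneg hs1
      have hub : Real.log (ww q s) ≤ 2 * s ^ q + Real.log q := by
        rw [hlww]; linarith
      have hupos : 0 ≤ Real.log (ww q s) := by
        have h1' : Real.log s ≤ Real.log (s ^ q) := Real.log_le_log hs0 hsy
        have h2' : 0 ≤ Real.log q := Real.log_nonneg hq
        rw [hlww]; linarith
      have huinv : (uu q s)⁻¹ = Real.exp (-(s ^ q)) := by
        unfold uu; rw [Real.exp_neg]
      rw [huinv]
      exact mul_le_mul_of_nonneg_right hub (Real.exp_pos _).le
  have hlogE : Tendsto (fun s => Real.log (ww q s * Real.exp (uu q s)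
      * ∫ τ in Set.Ioi s, Real.exp (-uu q τ)) * (uu q s)⁻¹) atTop (nhds 0) := by
    have h1 : Tendsto (fun s => Real.log (ww q s * Real.exp (uu q s)
        * ∫ τ in Set.Ioi s, Real.exp (-uu q τ))) atTop (nhds 0) := by
      have := (Real.continuousAt_log one_ne_zero).tendsto.comp (lemB hq)
      simpa [Function.comp_def] using this
    have h2 : Tendsto (fun s => (uu q s)⁻¹) atTop (nhds 0) := (tUU hq).inv_tendsto_atTop
    simpa using h1.mul h2
  have base : Tendsto (fun s => 1 + Real.log (ww q s) * (uu q s)⁻¹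
      - Real.log (ww q s * Real.exp (uu q s)
        * ∫ τ in Set.Ioi s, Real.exp (-uu q τ)) * (uu q s)⁻¹) atTop (nhds (1 + 0 - 0)) :=
    (tendsto_const_nhds.add hlog_ww).sub hlogE
  have base' : Tendsto (fun s => 1 + Real.log (ww q s) * (uu q s)⁻¹
      - Real.log (ww q s * Real.exp (uu q s)
        * ∫ τ in Set.Ioi s, Real.exp (-uu q τ)) * (uu q s)⁻¹) atTop (nhds 1) := by
    simpa using base
  apply Tendsto.congr' _ base'
  filter_upwards [hEgt, ev_ww_pos hq] with s hE hww
  set F := ∫ τ in Set.Ioi s, Real.exp (-uu q τ) with hF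
  have hu0 : (0:ℝ) < uu q s := Real.exp_pos _
  have hFpos : 0 < F := by
    have h2 : 0 < ww q s * Real.exp (uu q s) := by positivity
    nlinarith
  have hlog : Real.log (ww q s * Real.exp (uu q s) * F)
      = Real.log (ww q s) + uu q s + Real.log F := by
    rw [Real.log_mul (by positivity) hFpos.ne', Real.log_mul hww.ne' (Real.exp_ne_zero _),
      Real.log_exp]
  rw [hlog]
  field_simp
  ring
end final

/-- Example 3.4: for `f(s) = e^{e^{s^q}}` with `q ≥ 1`, both `1/B₁[f](s)` and
`1/B₂[f](s)` tend to `1` as `s → ∞`; i.e. the growth exponent is `B = 1`. -/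
theorem stmt19 (q : ℝ) (hq : 1 ≤ q) :
    Tendsto (fun s => invB1 (fun x => Real.exp (Real.exp (x ^ q)))
        (Fint (fun x => Real.exp (Real.exp (x ^ q)))) s) atTop (nhds 1)
    ∧ Tendsto (fun s => invB2 (fun x => Real.exp (Real.exp (x ^ q)))
        (Fint (fun x => Real.exp (Real.exp (x ^ q)))) s) atTop (nhds 1) := by
  set f : ℝ → ℝ := fun x => Real.exp (Real.exp (x ^ q)) with hfdef
  have hgl : ∀ x : ℝ, HasDerivAt f
      (Real.exp (Real.exp (x ^ q)) * (Real.exp (x ^ q) * (q * x ^ (q - 1)))) x :=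
    fun x => ((Real.hasDerivAt_rpow_const (Or.inr hq)).exp).exp
  have hFint : ∀ s : ℝ, Fint f s = ∫ τ in Set.Ioi s, Real.exp (-uu q τ) := by
    intro s
    unfold Fint uu
    simp only [hfdef, one_div, ← Real.exp_neg]
  have hderiv1 : ∀ s : ℝ, 0 < s → deriv f s = ww q s * Real.exp (uu q s) := by
    intro s hs
    rw [(hgl s).deriv]
    unfold ww uu
    rw [Real.rpow_sub hs, Real.rpow_one]
    ring
  have hderiv2 : ∀ s : ℝ, 0 < s →
      deriv (deriv f) s = Real.exp (uu q s) * ww q s ^ 2 * (1 + cc q s) := by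
    intro s hs
    have hd : deriv f = fun x =>
        Real.exp (Real.exp (x ^ q)) * (Real.exp (x ^ q) * (q * x ^ (q - 1))) :=
      funext fun x => (hgl x).deriv
    rw [hd]
    have hA := hgl s
    have hB : HasDerivAt (fun x : ℝ => Real.exp (x ^ q))
        (Real.exp (s ^ q) * (q * s ^ (q - 1))) s :=
      (Real.hasDerivAt_rpow_const (Or.inr hq)).exp
    have hC : HasDerivAt (fun x : ℝ => q * x ^ (q - 1))
        (q * ((q - 1) * s ^ (q - 1 - 1))) s :=
      (Real.hasDerivAt_rpow_const (Or.inl hs.ne')).const_mul q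
    have h := hA.mul (hB.mul hC)
    rw [HasDerivAt.deriv (f := fun x => Real.exp (Real.exp (x ^ q)) * (Real.exp (x ^ q) * (q * x ^ (q - 1)))) h]
    simp only [hfdef, Pi.mul_apply]
    have e1 : s ^ (q - 1) = s ^ q / s := by
      rw [Real.rpow_sub hs, Real.rpow_one]
    have e2 : s ^ (q - 1 - 1) = s ^ q / s / s := by
      rw [Real.rpow_sub hs, Real.rpow_one, e1]
    rw [e1, e2]
    unfold ww cc uu
    rw [Real.exp_neg]
    have hy := (ypos (q := q) hs).ne'
    have hq0 := (qpos hq).ne'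
    have hE := Real.exp_ne_zero (s ^ q)
    field_simp
  constructor
  · have base := (lemD hq).mul (lemA hq)
    have base' : Tendsto (fun s =>
        (-Real.log (∫ τ in Set.Ioi s, Real.exp (-uu q τ)) / uu q s)
        * (uu q s * (1 - ww q s * Real.exp (uu q s)
            * ∫ τ in Set.Ioi s, Real.exp (-uu q τ)))) atTop (nhds 1) := by
      simpa using base
    apply Tendsto.congr' _ base'
    filter_upwards [eventually_gt_atTop 0] with s hs
    unfold invB1
    rw [hFint s, hderiv1 s hs]
    have hu : uu q s ≠ 0 := (Real.exp_pos _).ne'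
    field_simp
  · have base := (lemB hq).mul (((lemD hq).pow 2).mul (lemC hq))
    have base' : Tendsto (fun s =>
        (ww q s * Real.exp (uu q s) * ∫ τ in Set.Ioi s, Real.exp (-uu q τ))
        * ((-Real.log (∫ τ in Set.Ioi s, Real.exp (-uu q τ)) / uu q s) ^ 2
          * (uu q s ^ 2 * ((1 + cc q s) * (ww q s * Real.exp (uu q s)
              * ∫ τ in Set.Ioi s, Real.exp (-uu q τ)) - 1)))) atTop (nhds 1) := by
      simpa using base
    apply Tendsto.congr' _ base'
    filter_upwards [eventually_gt_atTop 0, ev_ww_pos hq] with s hs hww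
    unfold invB2
    rw [hFint s, hderiv1 s hs, hderiv2 s hs]
    have hu : uu q s ≠ 0 := (Real.exp_pos _).ne'
    have hfs : f s = Real.exp (uu q s) := rfl
    rw [hfs]
    have hE := Real.exp_ne_zero (uu q s)
    field_simp
end
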